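/- arXiv:1504.06559 — 5 statements merged into one kernel-verified Lean document; each statement's English description precedes it below -/
import Mathlib

section
/- Let (X,T) be a topological dynamical system and let Y be a zero-dimensional compact metrizable space. Assume that for every ε > 0 there exists an essentially continuous ε-injective map from X to Y. Then (X,T) has the small boundary property. -/
open MeasureTheory Filter Topology Set
open scoped ENNReal NNReal Classical

noncomputable section

namespace Krieger

/-- The shift map `σ` on bi-infinite sequences: `(σ x) i = x (i+1)`. -/
def shift {Λ : Type*} (x : ℤ → Λ) : ℤ → Λ := fun i => x (i + 1)

/-- `Per_n(X,T)` : the set of periodic points of least period `n`. -/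
def leastPer {X : Type*} (T : X → X) (n : ℕ) : Set X :=
  {x | Function.minimalPeriod T x = n}

/-- The set `M(X,T)` of `T`-invariant Borel probability measures. -/
def invProb {X : Type*} [MeasurableSpace X] (T : X → X) : Set (ProbabilityMeasure X) :=
  {μ | ∀ s : Set X, MeasurableSet s → μ.toMeasure (T ⁻¹' s) = μ.toMeasure s}

/-- Pushforward of a probability measure under a map (junk value if not a.e. measurable). -/
def pushPM {X Y : Type*} [MeasurableSpace X] [MeasurableSpace Y] (ψ : X → Y)
    (μ : ProbabilityMeasure X) : ProbabilityMeasure Y :=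
  if h : AEMeasurable ψ μ.toMeasure then ⟨μ.toMeasure.map ψ, Measure.isProbabilityMeasure_map h⟩
  else ⟨Measure.dirac (ψ μ.nonempty.some), inferInstance⟩

/-- The induced map `ψ* : M(X,T) → M(Y)` on invariant probability measures, viewed as a
map into the ambient space of probability measures on `Y`. -/
def inducedMap {X Y : Type*} [MeasurableSpace X] [MeasurableSpace Y] (T : X → X) (ψ : X → Y) :
    ↥(invProb T) → ProbabilityMeasure Y :=
  fun μ => pushPM ψ (μ : ProbabilityMeasure X)

/-- A finite open cover of the whole space. -/
def IsOpenCover {X : Type*} [TopologicalSpace X] (U : Finset (Set X)) : Prop :=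
  (∀ A ∈ U, IsOpen A) ∧ ⋃₀ (U : Set (Set X)) = univ

/-- The join `U ∨ V` of two finite families of sets. -/
def joinC {X : Type*} (U V : Finset (Set X)) : Finset (Set X) :=
  (U ×ˢ V).image fun p => p.1 ∩ p.2

/-- The dynamical join `U^n = ⋁_{i=0}^{n-1} T^{-i} U`. -/
def dynCover {X : Type*} (T : X → X) (U : Finset (Set X)) : ℕ → Finset (Set X)
  | 0 => {univ}
  | n + 1 => joinC (dynCover T U n) (U.image fun A => T^[n] ⁻¹' A)

/-- Minimal cardinality of a subfamily of `V` covering the set `W`. -/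
def coverCard {X : Type*} (V : Finset (Set X)) (W : Set X) : ℕ :=
  sInf {m | ∃ F : Finset (Set X), F ⊆ V ∧ W ⊆ ⋃₀ (F : Set (Set X)) ∧ F.card = m}

/-- The topological conditional entropy `h(V|U)` of the cover `V` given the cover `U`. -/
def condEnt {X : Type*} (T : X → X) (V U : Finset (Set X)) : ℝ :=
  limsup (fun n : ℕ =>
    (⨆ W ∈ dynCover T U n, Real.log (coverCard (dynCover T V n) W)) / n) atTop

/-- `per(T|U)` : exponential growth rate of periodic orbits seen at the scale of `U`. -/
def perEnt {X : Type*} (T : X → X) (U : Finset (Set X)) : ℝ :=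
  limsup (fun n : ℕ =>
    (⨆ W ∈ dynCover T U n, Real.log (Nat.card ↥(leastPer T n ∩ W))) / n) atTop

/-- Asymptotic h-expansiveness: `inf_U sup_V h(V|U) = 0`. -/
def AsympHExpansive {X : Type*} [TopologicalSpace X] (T : X → X) : Prop :=
  ∀ ε > (0:ℝ), ∃ U : Finset (Set X), IsOpenCover U ∧
    ∀ V : Finset (Set X), IsOpenCover V → condEnt T V U < ε

/-- Asymptotic per-expansiveness: `inf_U per(T|U) = 0`. -/
def AsympPerExpansive {X : Type*} [TopologicalSpace X] (T : X → X) : Prop :=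
  ∀ ε > (0:ℝ), ∃ U : Finset (Set X), IsOpenCover U ∧ perEnt T U < ε

/-- Asymptotic expansiveness: both asymptotic h- and per-expansiveness. -/
def AsympExpansive {X : Type*} [TopologicalSpace X] (T : X → X) : Prop :=
  AsympHExpansive T ∧ AsympPerExpansive T

/-- A finite measurable partition of the space. -/
def IsMeasPartition {X : Type*} [MeasurableSpace X] (P : Finset (Set X)) : Prop :=
  (∀ A ∈ P, MeasurableSet A) ∧ ⋃₀ (P : Set (Set X)) = univ ∧
    ∀ A ∈ P, ∀ B ∈ P, A ≠ B → A ∩ B = ∅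

/-- A finite clopen partition of the space. -/
def IsClopenPartition {X : Type*} [TopologicalSpace X] (P : Finset (Set X)) : Prop :=
  (∀ A ∈ P, IsClopen A) ∧ ⋃₀ (P : Set (Set X)) = univ ∧
    ∀ A ∈ P, ∀ B ∈ P, A ≠ B → A ∩ B = ∅

/-- Shannon entropy `H_μ(P)` of a finite family of sets. -/
def entH {X : Type*} [MeasurableSpace X] (μ : Measure X) (P : Finset (Set X)) : ℝ :=
  ∑ A ∈ P, Real.negMulLog (μ A).toReal

/-- Dynamical entropy `h_μ(T,P) = lim_n (1/n) H_μ(⋁_{i<n} T^{-i}P)` of a partition. -/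
def entPart {X : Type*} [MeasurableSpace X] (T : X → X) (μ : Measure X)
    (P : Finset (Set X)) : ℝ :=
  limsup (fun n : ℕ => entH μ (dynCover T P n) / n) atTop

/-- Kolmogorov–Sinai entropy `h_μ(T)`. -/
def ksEntropy {X : Type*} [MeasurableSpace X] (T : X → X) (μ : Measure X) : ℝ :=
  ⨆ P : {P : Finset (Set X) // IsMeasPartition P}, entPart T μ P.1

/-- A set is null when it is negligible for every invariant ergodic probability measure. -/
def IsNullSet {X : Type*} [MeasurableSpace X] (T : X → X) (A : Set X) : Prop :=
  ∀ μ : Measure X, IsProbabilityMeasure μ → Ergodic T μ → μ A = 0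

/-- A set is full when it has full measure for every invariant ergodic probability measure. -/
def IsFullSet {X : Type*} [MeasurableSpace X] (T : X → X) (A : Set X) : Prop :=
  ∀ μ : Measure X, IsProbabilityMeasure μ → Ergodic T μ → μ A = 1

/-- The small boundary property : finite partitions with small boundaries and arbitrarily
small diameters. -/
def SBP {X : Type*} [MetricSpace X] [MeasurableSpace X] (T : X → X) : Prop :=
  ∀ ε > (0:ℝ), ∃ P : Finset (Set X),
    (⋃₀ (P : Set (Set X)) = univ) ∧
    (∀ A ∈ P, ∀ B ∈ P, A ≠ B → A ∩ B = ∅) ∧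
    (∀ A ∈ P, IsNullSet T (frontier A)) ∧
    (∀ A ∈ P, Metric.diam A < ε)

/-- A Borel map into a zero-dimensional space is essentially continuous when preimages of a
basis of clopen sets have small boundaries. -/
def EssCont {X Y : Type*} [TopologicalSpace X] [MeasurableSpace X] [TopologicalSpace Y]
    (T : X → X) (ψ : X → Y) : Prop :=
  ∃ B : Set (Set Y), TopologicalSpace.IsTopologicalBasis B ∧ (∀ s ∈ B, IsClopen s) ∧
    ∀ s ∈ B, IsNullSet T (frontier (ψ ⁻¹' s))

/-- An `ε`-injective map between metric spaces. -/
def EpsInjective {X Y : Type*} [MetricSpace X] [MetricSpace Y] (φ : X → Y) (ε : ℝ) : Prop :=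
  ∃ δ > (0:ℝ), ∀ Z : Set Y, Metric.diam Z < δ → Metric.diam (φ ⁻¹' Z) < ε

/-- The Cantor metric on the shift space : `d(x,y) = 2^{-min{ i ≥ 0 : x_i ≠ y_i or x_{-i} ≠ y_{-i}}}`. -/
def cantorDist {Λ : Type*} (x y : ℤ → Λ) : ℝ :=
  if x = y then 0
  else (2:ℝ)⁻¹ ^ sInf {n : ℕ | x (n:ℤ) ≠ y (n:ℤ) ∨ x (-(n:ℤ)) ≠ y (-(n:ℤ))}

/-- Diameter of a subset of the shift space for the Cantor metric. -/
def cDiam {Λ : Type*} (Z : Set (ℤ → Λ)) : ℝ :=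
  ⨆ p : Z × Z, cantorDist (p.1 : ℤ → Λ) (p.2 : ℤ → Λ)

/-- An `ε`-injective map into the shift space (with its Cantor metric). -/
def EpsInjShift {X Λ : Type*} [MetricSpace X] (φ : X → (ℤ → Λ)) (ε : ℝ) : Prop :=
  ∃ δ > (0:ℝ), ∀ Z : Set (ℤ → Λ), cDiam Z < δ → Metric.diam (φ ⁻¹' Z) < ε

/-- The pseudometric `d_N` on the shift space. -/
def dN {Λ : Type*} (N : ℕ) (x y : ℤ → Λ) : ℝ :=
  ⨆ n : {m : ℕ // N ≤ m},
    (Nat.card ↥{i : ℤ | i.natAbs ≤ (n:ℕ) ∧ x i ≠ y i} : ℝ) / (2 * (n:ℕ) + 1)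

/-- The Besicovitch pseudometric `d_∞ = lim_N d_N` on the shift space. -/
def dB {Λ : Type*} (x y : ℤ → Λ) : ℝ := ⨅ N : ℕ, dN N x y

/-- Cylinder sets on the coordinates `0, …, N-1`. -/
def cylinders (Λ : Type*) : Set (Set (ℤ → Λ)) :=
  {C | ∃ (N : ℕ) (w : ℕ → Λ), C = {y : ℤ → Λ | ∀ i : ℕ, i < N → y (i:ℤ) = w i}}

/-- An enumeration of the cylinder sets. -/
def IsCylEnum {Λ : Type*} (A : ℕ → Set (ℤ → Λ)) : Prop :=
  (∀ n, A n ∈ cylinders Λ) ∧ ∀ C ∈ cylinders Λ, ∃ n, A n = C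

/-- The metric `d_*` on probability measures associated to an enumeration of cylinders. -/
def dStar {Λ : Type*} [MeasurableSpace Λ] (A : ℕ → Set (ℤ → Λ))
    (μ ν : ProbabilityMeasure (ℤ → Λ)) : ℝ :=
  ∑' n : ℕ, |((μ (A n) : ℝ≥0) : ℝ) - ((ν (A n) : ℝ≥0) : ℝ)| / 2 ^ n

/-- The Hausdorff distance `d_H` associated to `d_*`. -/
def dHaus {Λ : Type*} [MeasurableSpace Λ] (A : ℕ → Set (ℤ → Λ))
    (S₁ S₂ : Set (ProbabilityMeasure (ℤ → Λ))) : ℝ :=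
  max (⨆ μ ∈ S₁, ⨅ ν ∈ S₂, dStar A μ ν) (⨆ ν ∈ S₂, ⨅ μ ∈ S₁, dStar A μ ν)

/-- The `n`-th empirical measure `(1/n) ∑_{k<n} δ_{T^k x}` (at time `n+1` so that it is
a probability measure). -/
def empMeas {X : Type*} [MeasurableSpace X] (T : X → X) (x : X) (n : ℕ) : Measure X :=
  (((n:ℝ≥0∞))⁻¹) • ∑ k ∈ Finset.range n, Measure.dirac (T^[k] x)

lemma empMeas_isProb {X : Type*} [MeasurableSpace X] (T : X → X) (x : X) (n : ℕ)
    (hn : n ≠ 0) : IsProbabilityMeasure (empMeas T x n) := by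
  constructor
  simp only [empMeas, Measure.smul_apply, Measure.coe_finset_sum, Finset.sum_apply,
    Measure.dirac_apply' _ MeasurableSet.univ, smul_eq_mul]
  simp only [Set.indicator_univ, Pi.one_apply, Finset.sum_const, Finset.card_range,
    nsmul_eq_mul, mul_one]
  exact ENNReal.inv_mul_cancel (by exact_mod_cast hn) (by simp)

/-- The empirical measures as probability measures. -/
def empPM {X : Type*} [MeasurableSpace X] (T : X → X) (x : X) (n : ℕ) :
    ProbabilityMeasure X :=
  ⟨empMeas T x (n + 1), empMeas_isProb T x (n + 1) (Nat.succ_ne_zero n)⟩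

/-- `φ(x)` : the set of accumulation points of the sequence of empirical measures at `x`. -/
def empCluster {X : Type*} [MeasurableSpace X] [TopologicalSpace X] [OpensMeasurableSpace X]
    (T : X → X) (x : X) : Set (ProbabilityMeasure X) :=
  {μ | MapClusterPt μ atTop (fun n : ℕ => empPM T x n)}

/-- A topological extension : a continuous surjective equivariant map. -/
def IsTopExtension {Y X : Type*} [TopologicalSpace Y] [TopologicalSpace X]
    (π : Y → X) (S : Y → Y) (T : X → X) : Prop :=
  Continuous π ∧ Function.Surjective π ∧ ∀ y, π (S y) = T (π y)

/-- A principal extension : entropies of invariant measures are preserved. -/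
def IsPrincipalExt {Y X : Type*} [MeasurableSpace Y] [MeasurableSpace X]
    (π : Y → X) (S : Y → Y) (T : X → X) : Prop :=
  ∀ ν : Measure Y, IsProbabilityMeasure ν →
    (∀ s : Set Y, MeasurableSet s → ν (S ⁻¹' s) = ν s) →
    ksEntropy S ν = ksEntropy T (ν.map π)

/-- A faithful extension : the induced map on invariant measures is a homeomorphism
onto `M(X,T)`. -/
def IsFaithfulExt {Y X : Type*} [MeasurableSpace Y] [MeasurableSpace X]
    [TopologicalSpace Y] [TopologicalSpace X] [OpensMeasurableSpace Y] [OpensMeasurableSpace X]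
    (π : Y → X) (S : Y → Y) (T : X → X) : Prop :=
  IsEmbedding (inducedMap S π) ∧ range (inducedMap S π) = invProb T

/-- A strongly faithful extension : faithful, and periodic points of least period `n`
are mapped onto each other. -/
def IsStronglyFaithfulExt {Y X : Type*} [MeasurableSpace Y] [MeasurableSpace X]
    [TopologicalSpace Y] [TopologicalSpace X] [OpensMeasurableSpace Y] [OpensMeasurableSpace X]
    (π : Y → X) (S : Y → Y) (T : X → X) : Prop :=
  IsFaithfulExt π S T ∧ ∀ n : ℕ, 1 ≤ n → π '' leastPer S n = leastPer T n

/-- Zero-dimensionality : a basis of clopen sets. -/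
def ZeroDim (X : Type*) [TopologicalSpace X] : Prop :=
  ∃ B : Set (Set X), TopologicalSpace.IsTopologicalBasis B ∧ ∀ s ∈ B, IsClopen s

end Krieger

open Krieger

lemma nullAux {X : Type*} [MeasurableSpace X] {T : X → X} {A B : Set X}
    (h : A ⊆ B) (hB : IsNullSet T B) : IsNullSet T A :=
  fun μ h1 h2 => le_antisymm ((measure_mono h).trans_eq (hB μ h1 h2)) zero_le

lemma frontier_biInter_subset' {X ι : Type*} [TopologicalSpace X] (F : Finset ι)
    (f : ι → Set X) : frontier (⋂ j ∈ F, f j) ⊆ ⋃ j ∈ F, frontier (f j) := by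
  classical
  induction F using Finset.induction_on with
  | empty => simp
  | insert _ _ ha ih =>
    rename_i a F
    rw [Finset.set_biInter_insert, Finset.set_biUnion_insert]
    refine (frontier_inter_subset _ _).trans ?_
    refine union_subset_union ?_ ?_
    · exact inter_subset_left
    · exact inter_subset_right.trans ih

/-- If for every `ε > 0` there is an essentially continuous `ε`-injective
map from `X` to a zero-dimensional compact metrizable space `Y`, then `(X,T)` has the small
boundary property. -/
theorem statement_3 {X Y : Type*} [MetricSpace X] [CompactSpace X] [MeasurableSpace X]
    [BorelSpace X] [MetricSpace Y] [CompactSpace Y] [MeasurableSpace Y] [BorelSpace Y]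
    (T : X ≃ₜ X) (hY : ZeroDim Y)
    (h : ∀ ε > (0:ℝ), ∃ ψ : X → Y, Measurable ψ ∧ EssCont ⇑T ψ ∧ EpsInjective ψ ε) :
    SBP ⇑T := by
  intro ε hε
  obtain ⟨ψ, hψm, ⟨B, hBbasis, hBclopen, hBnull⟩, δ, hδ, hinj⟩ := h ε hε
  -- every point of Y lies in a basic clopen set of diameter < δ
  have hcov : ∀ y : Y, ∃ s : Set Y, (s ∈ B ∧ Metric.diam s < δ) ∧ y ∈ s := by
    intro y
    obtain ⟨s, hsB, hys, hsub⟩ := hBbasis.exists_subset_of_mem_open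
      (Metric.mem_ball_self (by positivity : (0:ℝ) < δ/3)) Metric.isOpen_ball
    refine ⟨s, ⟨hsB, ?_⟩, hys⟩
    calc Metric.diam s ≤ Metric.diam (Metric.ball y (δ/3)) :=
          Metric.diam_mono hsub Metric.isBounded_ball
      _ ≤ 2 * (δ/3) := Metric.diam_ball (by positivity)
      _ < δ := by linarith
  -- finite subcover
  obtain ⟨t, ht⟩ := IsCompact.elim_finite_subcover (isCompact_univ (X := Y))
    (fun s : {s : Set Y // s ∈ B ∧ Metric.diam s < δ} => (s : Set Y))
    (fun s => (hBclopen s.1 s.2.1).isOpen)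
    (fun y _ => by obtain ⟨s, hs, hys⟩ := hcov y; exact mem_iUnion.2 ⟨⟨s, hs⟩, hys⟩)
  set n := t.card with hn
  set sF : Fin n → Set Y := fun i => ((t.equivFin.symm i : {x // x ∈ t}) : _).1 with hsF
  have hsFB : ∀ i, sF i ∈ B := fun i => (t.equivFin.symm i).1.2.1
  have hsFd : ∀ i, Metric.diam (sF i) < δ :=
    fun i => (t.equivFin.symm i).1.2.2
  have hcov' : ∀ y : Y, ∃ i, y ∈ sF i := by
    intro y
    have := ht (mem_univ y)
    simp only [mem_iUnion] at this
    obtain ⟨x, hx, hyx⟩ := this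
    refine ⟨t.equivFin ⟨x, hx⟩, ?_⟩
    simp [hsF, Equiv.symm_apply_apply]
    exact hyx
  -- disjointified pieces
  set pc : Fin n → Set Y := fun i => sF i ∩ ⋂ j ∈ Finset.Iio i, (sF j)ᶜ with hpc
  refine ⟨Finset.image (fun i => ψ ⁻¹' pc i) Finset.univ, ?_, ?_, ?_, ?_⟩
  · -- covers X
    ext x
    simp only [mem_sUnion, mem_univ, iff_true, Finset.coe_image, Finset.coe_univ, image_univ,
      mem_range]
    have hne : (Finset.univ.filter (fun i => ψ x ∈ sF i)).Nonempty := by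
      obtain ⟨i, hi⟩ := hcov' (ψ x)
      exact ⟨i, Finset.mem_filter.2 ⟨Finset.mem_univ _, hi⟩⟩
    set i₀ := (Finset.univ.filter (fun i => ψ x ∈ sF i)).min' hne with hi₀
    refine ⟨ψ ⁻¹' pc i₀, ⟨i₀, rfl⟩, ?_⟩
    have h1 : ψ x ∈ sF i₀ :=
      (Finset.mem_filter.1 ((Finset.univ.filter _).min'_mem hne)).2
    refine ⟨h1, ?_⟩
    simp only [mem_iInter, Finset.mem_Iio, mem_compl_iff]
    intro j hj hmem
    exact absurd (Finset.min'_le _ j (Finset.mem_filter.2 ⟨Finset.mem_univ _, hmem⟩))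
      (not_le.2 hj)
  · -- pairwise disjoint
    have key : ∀ i j : Fin n, i < j → pc i ∩ pc j = ∅ := by
      intro i j hij
      apply eq_empty_of_subset_empty
      rintro y ⟨⟨hyi, -⟩, ⟨-, hyj⟩⟩
      simp only [mem_iInter, Finset.mem_Iio, mem_compl_iff] at hyj
      exact hyj i hij hyi
    intro A hA B' hB' hAB
    simp only [Finset.mem_image, Finset.mem_univ, true_and] at hA hB'
    obtain ⟨i, rfl⟩ := hA
    obtain ⟨j, rfl⟩ := hB'
    have hij : i ≠ j := fun hh => hAB (by rw [hh])
    rw [← preimage_inter]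
    rcases lt_or_gt_of_ne hij with hlt | hgt
    · rw [key i j hlt, preimage_empty]
    · rw [inter_comm, key j i hgt, preimage_empty]
  · -- null frontiers
    intro A hA
    simp only [Finset.mem_image, Finset.mem_univ, true_and] at hA
    obtain ⟨i, rfl⟩ := hA
    have hrw : ψ ⁻¹' pc i = (ψ ⁻¹' sF i) ∩ ⋂ j ∈ Finset.Iio i, (ψ ⁻¹' sF j)ᶜ := by
      simp [hpc, preimage_inter, preimage_iInter, preimage_compl]
    have hsub : frontier (ψ ⁻¹' pc i) ⊆
        frontier (ψ ⁻¹' sF i) ∪ ⋃ j ∈ Finset.Iio i, frontier (ψ ⁻¹' sF j) := by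
      rw [hrw]
      refine (frontier_inter_subset _ _).trans ?_
      refine union_subset_union inter_subset_left ?_
      refine inter_subset_right.trans ?_
      refine (frontier_biInter_subset' _ _).trans ?_
      refine iUnion₂_mono fun j hj => ?_
      rw [frontier_compl]
    refine nullAux hsub ?_
    intro μ h1 h2
    rw [measure_union_null_iff]
    constructor
    · exact hBnull _ (hsFB i) μ h1 h2
    · exact (measure_biUnion_null_iff (Finset.Iio i).countable_toSet).2
        (fun j _ => hBnull _ (hsFB j) μ h1 h2)
  · -- small diameters
    intro A hA
    simp only [Finset.mem_image, Finset.mem_univ, true_and] at hA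
    obtain ⟨i, rfl⟩ := hA
    refine hinj _ ?_
    calc Metric.diam (pc i) ≤ Metric.diam (sF i) :=
          Metric.diam_mono inter_subset_left (isCompact_univ.isBounded.subset (subset_univ _))
      _ < δ := hsFd i
end
end

section
/- Let (X,T) be a zero-dimensional topological dynamical system. Then for every sequence (n_k)_{k≥1} of positive integers and every sequence (ε_k)_{k≥1} of positive real numbers there exist a sequence (U_k)_{k≥1} of clopen subsets of X and a sequence (P_k)_{k≥1} of clopen subsets of X, where each P_k contains the set ⋃_{n ≤ n_k} Per_n(X,T) of periodic points of least period at most n_k and is contained in its ε_k-neighborhood, such that for every k: (i) the sets U_k, T U_k, …, T^{n_k − 1} U_k are pairwise disjoint; (ii) ⋃_{|i| < n'_k} T^i U_k = X \ P_k, where n'_k := n_1 + ⋯ + n_k; (iii) U_{k+1} = U'_{k+1} ∪ U''_{k+1} for some sets U'_{k+1} ⊆ U_k and U''_{k+1} ⊆ P_k. -/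
open MeasureTheory Filter Topology Set
open scoped ENNReal NNReal Classical

noncomputable section

open Krieger

namespace S6

variable {X : Type*} [TopologicalSpace X]

/-- The `i`-th power of the homeomorphism, as a function. -/
def F (T : X ≃ₜ X) (i : ℤ) : X → X := ⇑(T.toEquiv ^ i)

/-- Periodic points of least period between `1` and `n`. -/
def Per (T : X ≃ₜ X) (n : ℕ) : Set X :=
  {x | 1 ≤ Function.minimalPeriod ⇑T x ∧ Function.minimalPeriod ⇑T x ≤ n}

/-- Union of images over `|i| ≤ n`. -/
def D (T : X ≃ₜ X) (n : ℕ) (W : Set X) : Set X :=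
  ⋃ i ∈ Finset.Icc (-(n:ℤ)) (n:ℤ), F T i '' W

/-- Disjointified union along a list of (shift, base set) pairs. -/
def build (T : X ≃ₜ X) (n : ℕ) : List (ℤ × Set X) → Set X
  | [] => ∅
  | p :: L => build T n L ∪ (p.2 \ D T n (build T n L))

open Function Set TopologicalSpace

variable (T : X ≃ₜ X) {n : ℕ}

lemma F_add (i j : ℤ) : ∀ x, F T (i + j) x = F T i (F T j x) := by
  intro x; simp only [F, zpow_add, Equiv.Perm.coe_mul, comp_apply]

lemma F_zero : F T 0 = id := by
  funext x; simp [F]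

lemma F_homeo (i : ℤ) : ∃ H : X ≃ₜ X, F T i = ⇑H := by
  induction i using Int.induction_on with
  | zero => exact ⟨Homeomorph.refl X, by simp [F]⟩
  | succ n ih =>
    obtain ⟨H, hH⟩ := ih
    refine ⟨(T : X ≃ₜ X).trans H, ?_⟩
    funext x
    have : F T ((n:ℤ) + 1) x = F T n (F T 1 x) := F_add T n 1 x
    simp only [this, hH]
    simp [F, Homeomorph.trans_apply]
  | pred n ih =>
    obtain ⟨H, hH⟩ := ih
    refine ⟨T.symm.trans H, ?_⟩
    funext x
    have : F T (-(n:ℤ) - 1) x = F T (-n) (F T (-1) x) := by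
      have := F_add T (-n) (-1) x; rw [← this]; ring_nf
    simp only [this, hH]
    have h1 : F T (-1) x = T.symm x := by
      simp [F, zpow_neg, zpow_one, Equiv.Perm.inv_def]
    simp [h1, Homeomorph.trans_apply]

lemma F_bij (i : ℤ) : Function.Bijective (F T i) := (T.toEquiv ^ i).bijective

lemma F_iterate (m : ℕ) : (⇑T)^[m] = F T (m : ℤ) := by
  induction m with
  | zero => simp [F_zero]
  | succ n ih =>
    funext x
    rw [iterate_succ', comp_apply, ih]
    have : F T ((n:ℤ) + 1) x = F T 1 (F T n x) := by
      have := F_add T 1 n x; rw [← this]; ring_nf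
    rw [Nat.cast_add, Nat.cast_one, this]
    simp [F]

lemma F_clopen (i : ℤ) {A : Set X} (hA : IsClopen A) : IsClopen (F T i '' A) := by
  obtain ⟨H, hH⟩ := F_homeo T i
  rw [hH]
  exact ⟨H.isClosedMap _ hA.1, H.isOpenMap _ hA.2⟩

lemma F_open (i : ℤ) {A : Set X} (hA : IsOpen A) : IsOpen (F T i '' A) := by
  obtain ⟨H, hH⟩ := F_homeo T i
  rw [hH]; exact H.isOpenMap _ hA

lemma mem_per_iff {n : ℕ} {x : X} :
    x ∈ Per T n ↔ ∃ p, 1 ≤ p ∧ p ≤ n ∧ (⇑T)^[p] x = x := by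
  constructor
  · rintro ⟨h1, h2⟩
    exact ⟨minimalPeriod ⇑T x, h1, h2, isPeriodicPt_minimalPeriod ⇑T x⟩
  · rintro ⟨p, hp1, hpn, hpx⟩
    have hper : IsPeriodicPt ⇑T p x := hpx
    have hpos : 0 < minimalPeriod ⇑T x :=
      minimalPeriod_pos_of_mem_periodicPts (mem_periodicPts.2 ⟨p, hp1, hper⟩)
    exact ⟨hpos, le_trans (Nat.le_of_dvd hp1 hper.minimalPeriod_dvd) hpn⟩

lemma per_closed [T2Space X] (n : ℕ) : IsClosed (Per T n) := by
  have : Per T n = ⋃ p ∈ Finset.Icc 1 n, {x : X | (⇑T)^[p] x = x} := by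
    ext x
    simp only [mem_per_iff, mem_iUnion, Finset.mem_Icc, mem_setOf_eq, exists_prop]
    constructor
    · rintro ⟨p, h1, h2, h3⟩; exact ⟨p, ⟨h1, h2⟩, h3⟩
    · rintro ⟨p, ⟨h1, h2⟩, h3⟩; exact ⟨p, h1, h2, h3⟩
  rw [this]
  exact isClosed_biUnion_finset fun p _ =>
    isClosed_eq (T.continuous.iterate p) continuous_id

lemma per_map {n : ℕ} (i : ℤ) {x : X} (hx : x ∈ Per T n) : F T i x ∈ Per T n := by
  rw [mem_per_iff] at hx ⊢
  obtain ⟨p, h1, h2, h3⟩ := hx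
  refine ⟨p, h1, h2, ?_⟩
  rw [F_iterate]
  have h4 : F T p (F T i x) = F T i (F T p x) := by
    rw [← F_add, ← F_add, add_comm]
  rw [h4, ← F_iterate, h3]

lemma F_cancel (i : ℤ) (x : X) : F T (-i) (F T i x) = x := by
  rw [← F_add, neg_add_cancel, F_zero, id_eq]

lemma D_clopen {W : Set X} (hW : IsClopen W) : IsClopen (D T n W) :=
  isClopen_biUnion_finset fun i _ => F_clopen T i hW

lemma D_mono {W W' : Set X} (h : W ⊆ W') : D T n W ⊆ D T n W' := by
  refine Set.iUnion₂_mono fun i _ => Set.image_mono h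

lemma subset_D {W : Set X} : W ⊆ D T n W := by
  intro x hx
  have h0 : (0:ℤ) ∈ Finset.Icc (-(n:ℤ)) (n:ℤ) := by simp [Finset.mem_Icc]
  refine Set.mem_biUnion h0 ?_
  rw [F_zero]; simpa using hx

lemma mem_D_iff {W : Set X} {x : X} :
    x ∈ D T n W ↔ ∃ i : ℤ, i.natAbs ≤ n ∧ x ∈ F T i '' W := by
  simp only [D, Set.mem_iUnion, Finset.mem_Icc, exists_prop]
  constructor
  · rintro ⟨i, ⟨h1, h2⟩, h3⟩; exact ⟨i, by omega, h3⟩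
  · rintro ⟨i, h1, h3⟩; exact ⟨i, by omega, h3⟩

lemma build_clopen (L : List (ℤ × Set X)) (h : ∀ p ∈ L, IsClopen p.2) :
    IsClopen (build T n L) := by
  induction L with
  | nil => exact isClopen_empty
  | cons p L ih =>
    have hC := ih fun q hq => h q (List.mem_cons_of_mem p hq)
    exact hC.union ((h p (List.mem_cons_self)).diff (D_clopen T hC))

lemma build_subset (L : List (ℤ × Set X)) {C : Set X} (h : ∀ p ∈ L, p.2 ⊆ C) :
    build T n L ⊆ C := by
  induction L with
  | nil => exact empty_subset C
  | cons p L ih =>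
    refine Set.union_subset (ih fun q hq => h q (List.mem_cons_of_mem p hq)) ?_
    exact (Set.diff_subset).trans (h p (List.mem_cons_self))

lemma build_absorb (L : List (ℤ × Set X)) : ∀ p ∈ L, p.2 ⊆ D T n (build T n L) := by
  induction L with
  | nil => intro p hp; cases hp
  | cons q L ih =>
    intro p hp
    have hsub : build T n L ⊆ build T n (q :: L) := Set.subset_union_left
    rcases List.mem_cons.1 hp with rfl | hp
    · intro x hx
      by_cases hxD : x ∈ D T n (build T n L)
      · exact D_mono T hsub hxD
      · exact subset_D T (Set.mem_union_right _ ⟨hx, hxD⟩)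
    · exact (ih p hp).trans (D_mono T hsub)

lemma build_disjoint (L : List (ℤ × Set X))
    (h : ∀ p ∈ L, ∀ m : ℕ, 1 ≤ m → m ≤ n → p.2 ∩ (⇑T)^[m] '' p.2 = ∅) :
    ∀ i : ℤ, 1 ≤ i.natAbs → i.natAbs ≤ n →
      ∀ z ∈ build T n L, z ∉ F T i '' build T n L := by
  induction L with
  | nil => intro i _ _ z hz; cases hz
  | cons p L ih =>
    intro i hi1 hi2 z hz hz'
    obtain ⟨w, hw, hwz⟩ := hz'
    have hih := ih fun q hq => h q (List.mem_cons_of_mem p hq)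
    rcases hz with hzC | hzB
    · rcases hw with hwC | hwB
      · exact hih i hi1 hi2 z hzC ⟨w, hwC, hwz⟩
      · -- z ∈ C, w ∈ B, z = F i w ⟹ w = F (-i) z ∈ D C
        have : w ∈ D T n (build T n L) := by
          rw [mem_D_iff]
          refine ⟨-i, by omega, z, hzC, ?_⟩
          rw [← hwz, F_cancel]
        exact hwB.2 this
    · rcases hw with hwC | hwB
      · -- z ∈ B, w ∈ C : z = F i w ∈ D C
        have : z ∈ D T n (build T n L) := by
          rw [mem_D_iff]; exact ⟨i, by omega, w, hwC, hwz⟩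
        exact hzB.2 this
      · -- both in p.2
        have hd := h p (List.mem_cons_self) i.natAbs hi1 hi2
        rcases Int.natAbs_eq i with he | he
        · have : z ∈ p.2 ∩ (⇑T)^[i.natAbs] '' p.2 := by
            refine ⟨hzB.1, w, hwB.1, ?_⟩
            rw [F_iterate, ← he, hwz]
          rw [hd] at this; exact this
        · have : w ∈ p.2 ∩ (⇑T)^[i.natAbs] '' p.2 := by
            refine ⟨hwB.1, z, hzB.1, ?_⟩
            rw [F_iterate]
            have h5 : (i.natAbs : ℤ) = -i := by omega
            rw [h5, ← hwz, F_cancel]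
          rw [hd] at this; exact this

lemma marker {X : Type*} [MetricSpace X] [CompactSpace X] (T : X ≃ₜ X)
    (hzero : ∃ B : Set (Set X), IsTopologicalBasis B ∧ ∀ s ∈ B, IsClopen s)
    (S : Set X) (hS : IsClopen S) (r n : ℕ) (hn : 1 ≤ n)
    (hcov : ∀ x : X, ∃ i : ℤ, i.natAbs ≤ r ∧ x ∈ F T i '' S)
    (ε : ℝ) (hε : 0 < ε) :
    ∃ U : Set X, IsClopen U ∧ U ⊆ S ∧
      (∀ i : ℤ, 1 ≤ i.natAbs → i.natAbs ≤ n - 1 → ∀ z ∈ U, z ∉ F T i '' U) ∧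
      U ∩ Per T n = ∅ ∧
      ∀ x : X, (¬ ∃ y ∈ Per T n, dist x y < ε) →
        ∃ i : ℤ, i.natAbs ≤ r + (n - 1) ∧ x ∈ F T i '' U := by
  obtain ⟨B, hB, hBclopen⟩ := hzero
  set Nb : Set X := ⋃ y ∈ Per T n, Metric.ball y ε with hNb
  have hKmem : ∀ x : X, x ∈ Nbᶜ ↔ ¬ ∃ y ∈ Per T n, dist x y < ε := by
    intro x
    simp [hNb, Metric.mem_ball]
  have hNbopen : IsOpen Nb := isOpen_biUnion fun y _ => Metric.isOpen_ball
  have hK : IsCompact Nbᶜ := hNbopen.isClosed_compl.isCompact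
  -- Step A
  have stepA : ∀ x : ↥(Nbᶜ), ∃ (i : ℤ) (A : Set X), i.natAbs ≤ r ∧ IsClopen A ∧ A ⊆ S ∧
      A ∩ Per T n = ∅ ∧ (∀ m : ℕ, 1 ≤ m → m ≤ n - 1 → A ∩ (⇑T)^[m] '' A = ∅) ∧
      (x : X) ∈ F T i '' A := by
    rintro ⟨x, hx⟩
    obtain ⟨i, hi, y, hyS, hyx⟩ := hcov x
    have hxP : x ∉ Per T n := fun hP => (hKmem x).1 hx ⟨x, hP, by simpa using hε⟩
    have hyP : y ∉ Per T n := fun hP => hxP (hyx ▸ per_map T i hP)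
    have hsep : ∀ m : ℕ, ∃ W : Set X, IsOpen W ∧ y ∈ W ∧
        (1 ≤ m → m ≤ n - 1 → W ∩ (⇑T)^[m] '' W = ∅) := by
      intro m
      by_cases hm : 1 ≤ m ∧ m ≤ n - 1
      · have hne : (⇑T)^[m] y ≠ y := by
          intro he
          exact hyP ((mem_per_iff T).2 ⟨m, hm.1, by omega, he⟩)
        obtain ⟨O2, O1, hO2, hO1, hm2, hm1, hdisj⟩ := t2_separation hne
        refine ⟨O1 ∩ (⇑T)^[m] ⁻¹' O2,
          hO1.inter (hO2.preimage (T.continuous.iterate m)), ⟨hm1, hm2⟩, fun _ _ => ?_⟩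
        rw [Set.eq_empty_iff_forall_notMem]
        rintro z ⟨⟨hz1, hz2⟩, w, ⟨hw1, hw2⟩, hwz⟩
        exact Set.disjoint_left.1 hdisj (hwz ▸ hw2) hz1
      · exact ⟨univ, isOpen_univ, mem_univ y, fun h1 h2 => absurd ⟨h1, h2⟩ hm⟩
    choose Wm hWopen hWy hWdisj using hsep
    have hOopen : IsOpen ((S ∩ (Per T n)ᶜ) ∩ ⋂ m ∈ Finset.Icc 1 (n-1), Wm m) :=
      (hS.2.inter (per_closed T n).isOpen_compl).inter
        (isOpen_biInter_finset fun m _ => hWopen m)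
    have hyO : y ∈ (S ∩ (Per T n)ᶜ) ∩ ⋂ m ∈ Finset.Icc 1 (n-1), Wm m :=
      ⟨⟨hyS, hyP⟩, Set.mem_biInter fun m _ => hWy m⟩
    obtain ⟨A, hAB, hyA, hAO⟩ := hB.exists_subset_of_mem_open hyO hOopen
    refine ⟨i, A, hi, hBclopen A hAB, fun a ha => (hAO ha).1.1, ?_, ?_, ⟨y, hyA, hyx⟩⟩
    · ext a
      simp only [mem_inter_iff, mem_empty_iff_false, iff_false, not_and]
      exact fun ha hpa => (hAO ha).1.2 hpa
    · intro m hm1 hm2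
      have hsub : A ⊆ Wm m := fun a ha =>
        Set.mem_iInter₂.1 (hAO ha).2 m (Finset.mem_Icc.2 ⟨hm1, hm2⟩)
      have := hWdisj m hm1 hm2
      apply Set.eq_empty_of_subset_empty
      calc A ∩ (⇑T)^[m] '' A ⊆ Wm m ∩ (⇑T)^[m] '' Wm m :=
            Set.inter_subset_inter hsub (Set.image_mono hsub)
        _ = ∅ := this
  choose ix Ax hix hAclop hAS hAP hAdisj hxmem using stepA
  have hcov2 : Nbᶜ ⊆ ⋃ x : ↥(Nbᶜ), F T (ix x) '' Ax x := fun z hz =>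
    Set.mem_iUnion.2 ⟨⟨z, hz⟩, hxmem ⟨z, hz⟩⟩
  obtain ⟨t, ht⟩ := hK.elim_finite_subcover (fun x : ↥(Nbᶜ) => F T (ix x) '' Ax x)
    (fun x => F_open T _ (hAclop x).2) hcov2
  set L : List (ℤ × Set X) := t.toList.map fun x => (ix x, Ax x) with hL
  have hmemL : ∀ p ∈ L, ∃ c ∈ t, (ix c, Ax c) = p := by
    intro p hp
    rw [hL, List.mem_map] at hp
    obtain ⟨c, hc, hcp⟩ := hp
    exact ⟨c, Finset.mem_toList.1 hc, hcp⟩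
  set U := build T (n-1) L with hU
  have hUS : U ⊆ S := build_subset T L fun p hp => by
    obtain ⟨c, _, rfl⟩ := hmemL p hp; exact hAS c
  have hUP : U ⊆ (Per T n)ᶜ := build_subset T L fun p hp => by
    obtain ⟨c, _, rfl⟩ := hmemL p hp
    intro a ha hpa
    have : a ∈ Ax c ∩ Per T n := ⟨ha, hpa⟩
    rw [hAP c] at this; exact this
  refine ⟨U, build_clopen T L fun p hp => by
      obtain ⟨c, _, rfl⟩ := hmemL p hp; exact hAclop c,
    hUS, build_disjoint T L fun p hp => by
      obtain ⟨c, _, rfl⟩ := hmemL p hp; exact hAdisj c, ?_, ?_⟩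
  · ext a
    simp only [mem_inter_iff, mem_empty_iff_false, iff_false, not_and]
    exact fun ha hpa => hUP ha hpa
  · intro x hx
    have hx' : x ∈ Nbᶜ := (hKmem x).2 hx
    obtain ⟨c, hct, hxc⟩ := Set.mem_iUnion₂.1 (ht hx')
    obtain ⟨y, hy, hyx⟩ := hxc
    have hyD : y ∈ D T (n-1) U := build_absorb T L (ix c, Ax c)
      (by rw [hL, List.mem_map]; exact ⟨c, Finset.mem_toList.2 hct, rfl⟩) hy
    obtain ⟨i', hi', u, hu, hui⟩ := (mem_D_iff T).1 hyD
    refine ⟨ix c + i', ?_, u, hu, ?_⟩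
    · calc (ix c + i').natAbs ≤ (ix c).natAbs + i'.natAbs := Int.natAbs_add_le _ _
        _ ≤ r + (n - 1) := Nat.add_le_add (hix c) hi'
    · rw [F_add, hui, hyx]

lemma mainstep {X : Type*} [MetricSpace X] [CompactSpace X] (T : X ≃ₜ X)
    (hzero : ∃ B : Set (Set X), IsTopologicalBasis B ∧ ∀ s ∈ B, IsClopen s)
    (S : Set X) (hS : IsClopen S) (r n n' : ℕ) (hn : 1 ≤ n) (hrn : r + n ≤ n')
    (hcov : ∀ x : X, ∃ i : ℤ, i.natAbs ≤ r ∧ x ∈ F T i '' S)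
    (ε : ℝ) (hε : 0 < ε) :
    ∃ U P : Set X, IsClopen U ∧ IsClopen P ∧ U ⊆ S ∧
      Per T n ⊆ P ∧ (P ⊆ {x | ∃ y, y ∈ Per T n ∧ dist x y < ε}) ∧
      (∀ i < n, ∀ j < n, i ≠ j → Disjoint ((⇑T)^[i] '' U) ((⇑T)^[j] '' U)) ∧
      (⋃ (i : ℤ) (_ : i.natAbs < n'), F T i '' U) = univ \ P := by
  obtain ⟨U, hUclop, hUS, hUdisj, hUPer, hUcov⟩ := marker T hzero S hS r n hn hcov ε hε
  set Tw := ⋃ (i : ℤ) (_ : i.natAbs < n'), F T i '' U with hTw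
  have hTweq : Tw = ⋃ i ∈ Finset.Icc (-(n':ℤ)+1) ((n':ℤ)-1), F T i '' U := by
    ext x
    simp only [hTw, mem_iUnion, Finset.mem_Icc, exists_prop]
    constructor
    · rintro ⟨i, h1, h2⟩; exact ⟨i, by omega, h2⟩
    · rintro ⟨i, h1, h2⟩; exact ⟨i, by omega, h2⟩
  have hTwclop : IsClopen Tw := by
    rw [hTweq]; exact isClopen_biUnion_finset fun i _ => F_clopen T i hUclop
  have hkey : ∀ a b : ℕ, a < b → b < n →
      Disjoint ((⇑T)^[a] '' U) ((⇑T)^[b] '' U) := by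
    intro a b hab hbn
    rw [Set.disjoint_left]
    rintro z ⟨u, hu, huz⟩ ⟨v, hv, hvz⟩
    obtain ⟨c, hc1, hc2⟩ : ∃ c, 1 ≤ c ∧ b = a + c := ⟨b - a, by omega, by omega⟩
    have h2 : (⇑T)^[a] u = (⇑T)^[a] ((⇑T)^[c] v) := by
      rw [huz, ← hvz, hc2, Function.iterate_add_apply]
    have huv : u = (⇑T)^[c] v := T.injective.iterate a h2
    refine hUdisj ((c : ℕ) : ℤ) (by simp; omega) (by simp; omega) u hu ?_
    exact ⟨v, hv, by rw [← F_iterate, ← huv]⟩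
  refine ⟨U, Twᶜ, hUclop, hTwclop.compl, hUS, ?_, ?_, ?_, ?_⟩
  · intro x hx hxTw
    obtain ⟨i, hi, u, hu, hux⟩ := by simpa only [hTw, mem_iUnion, exists_prop] using hxTw
    have h1 : F T (-i) x ∈ Per T n := per_map T (-i) hx
    rw [← hux, F_cancel] at h1
    have : u ∈ U ∩ Per T n := ⟨hu, h1⟩
    rw [hUPer] at this; exact this
  · intro x hx
    rcases Classical.em (∃ y ∈ Per T n, dist x y < ε) with h | h
    · obtain ⟨y, hy, hd⟩ := h; exact ⟨y, hy, hd⟩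
    · obtain ⟨i, hi, hmem⟩ := hUcov x h
      exact absurd (by rw [hTw]; exact mem_iUnion.2 ⟨i, mem_iUnion.2 ⟨by omega, hmem⟩⟩) hx
  · intro i hi j hj hij
    rcases lt_or_gt_of_ne hij with h | h
    · exact hkey i j h hj
    · exact (hkey j i h hi).symm
  · rw [Set.diff_eq, Set.univ_inter, compl_compl]

end S6

/-- The nested marker property for zero-dimensional systems. -/
theorem statement_6 {X : Type*} [MetricSpace X] [CompactSpace X]
    (T : X ≃ₜ X) (hzero : ZeroDim X)
    (nseq : ℕ → ℕ) (hn : ∀ k, 1 ≤ nseq k) (εseq : ℕ → ℝ) (hε : ∀ k, 0 < εseq k) :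
    ∃ U P : ℕ → Set X,
      (∀ k, IsClopen (U k)) ∧ (∀ k, IsClopen (P k)) ∧
      -- `P k` contains the periodic points of least period at most `n_k` …
      (∀ k, {x | 1 ≤ Function.minimalPeriod ⇑T x ∧ Function.minimalPeriod ⇑T x ≤ nseq k}
        ⊆ P k) ∧
      -- … and is contained in their `ε_k`-neighborhood
      (∀ k, P k ⊆ {x | ∃ y, (1 ≤ Function.minimalPeriod ⇑T y ∧
        Function.minimalPeriod ⇑T y ≤ nseq k) ∧ dist x y < εseq k}) ∧
      -- (i) the iterates `U_k, T U_k, …, T^{n_k - 1} U_k` are pairwise disjoint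
      (∀ k, ∀ i < nseq k, ∀ j < nseq k, i ≠ j →
        Disjoint ((⇑T)^[i] '' U k) ((⇑T)^[j] '' U k)) ∧
      -- (ii) `⋃_{|i| < n'_k} T^i U_k = X \ P_k` where `n'_k = n_1 + ⋯ + n_k`
      (∀ k, (⋃ (i : ℤ) (_ : i.natAbs < ∑ l ∈ Finset.range (k+1), nseq l),
        ⇑(T.toEquiv ^ i) '' U k) = Set.univ \ P k) ∧
      -- (iii) `U_{k+1} = U'_{k+1} ∪ U''_{k+1}` with `U'_{k+1} ⊆ U_k` and `U''_{k+1} ⊆ P_k`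
      (∀ k, ∃ U' U'' : Set X, U (k+1) = U' ∪ U'' ∧ U' ⊆ U k ∧ U'' ⊆ P k) := by
  classical
  have hzero' : ∃ B : Set (Set X), TopologicalSpace.IsTopologicalBasis B ∧
      ∀ s ∈ B, IsClopen s := hzero
  set n' : ℕ → ℕ := fun k => ∑ l ∈ Finset.range (k+1), nseq l with hn'def
  have hn'1 : ∀ k, 1 ≤ n' k := by
    intro k
    calc 1 ≤ nseq 0 := hn 0
      _ ≤ n' k := Finset.single_le_sum (f := nseq) (fun l _ => Nat.zero_le _)
          (Finset.mem_range.2 (Nat.succ_pos k))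
  have hn'succ : ∀ k, n' (k+1) = n' k + nseq (k+1) := fun k => Finset.sum_range_succ nseq (k+1)
  let Inv : ℕ → Set X × Set X → Prop := fun k UP =>
    IsClopen UP.1 ∧ IsClopen UP.2 ∧ S6.Per T (nseq k) ⊆ UP.2 ∧
    (UP.2 ⊆ {x | ∃ y, y ∈ S6.Per T (nseq k) ∧ dist x y < εseq k}) ∧
    (∀ i < nseq k, ∀ j < nseq k, i ≠ j → Disjoint ((⇑T)^[i] '' UP.1) ((⇑T)^[j] '' UP.1)) ∧
    (⋃ (i : ℤ) (_ : i.natAbs < n' k), S6.F T i '' UP.1) = Set.univ \ UP.2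
  have base : ∃ UP : Set X × Set X, Inv 0 UP := by
    have hsum : n' 0 = nseq 0 := by simp [hn'def]
    obtain ⟨U, P, h1, h2, _, h4, h5, h6, h7⟩ :=
      S6.mainstep T hzero' Set.univ isClopen_univ 0 (nseq 0) (n' 0) (hn 0)
        (by omega)
        (fun x => ⟨0, le_refl 0, by rw [S6.F_zero, Set.image_id]; exact Set.mem_univ x⟩)
        (εseq 0) (hε 0)
    exact ⟨(U, P), h1, h2, h4, h5, h6, h7⟩
  have step : ∀ k (UP : Set X × Set X), Inv k UP →
      ∃ UP2 : Set X × Set X, Inv (k+1) UP2 ∧ UP2.1 ⊆ UP.1 ∪ UP.2 := by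
    intro k UP hInv
    obtain ⟨hc1, hc2, hc3, hc4, hc5, hc6⟩ := hInv
    have hcov : ∀ x : X, ∃ i : ℤ, i.natAbs ≤ n' k - 1 ∧ x ∈ S6.F T i '' (UP.1 ∪ UP.2) := by
      intro x
      by_cases hx : x ∈ UP.2
      · exact ⟨0, Nat.zero_le _, by rw [S6.F_zero, Set.image_id]; exact Set.mem_union_right _ hx⟩
      · have hx2 : x ∈ Set.univ \ UP.2 := ⟨trivial, hx⟩
        rw [← hc6] at hx2
        obtain ⟨i, hi, hmem⟩ := by simpa only [Set.mem_iUnion, exists_prop] using hx2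
        exact ⟨i, by omega, Set.image_mono Set.subset_union_left hmem⟩
    obtain ⟨U, P, h1, h2, h3, h4, h5, h6, h7⟩ :=
      S6.mainstep T hzero' (UP.1 ∪ UP.2) (hc1.union hc2) (n' k - 1) (nseq (k+1)) (n' (k+1))
        (hn (k+1)) (by have := hn'succ k; have := hn'1 k; omega) hcov (εseq (k+1)) (hε (k+1))
    exact ⟨(U, P), ⟨h1, h2, h4, h5, h6, h7⟩, h3⟩
  obtain ⟨UP0, hUP0⟩ := base
  choose stepF hstepInv hstepSub using step
  let G : ∀ k : ℕ, {UP : Set X × Set X // Inv k UP} :=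
    fun k => Nat.rec ⟨UP0, hUP0⟩
      (fun k prev => ⟨stepF k prev.1 prev.2, hstepInv k prev.1 prev.2⟩) k
  refine ⟨fun k => (G k).1.1, fun k => (G k).1.2, fun k => (G k).2.1, fun k => (G k).2.2.1,
    fun k => (G k).2.2.2.1, fun k => (G k).2.2.2.2.1, fun k => (G k).2.2.2.2.2.1,
    fun k => (G k).2.2.2.2.2.2, ?_⟩
  intro k
  have hsub : (G (k+1)).1.1 ⊆ (G k).1.1 ∪ (G k).1.2 := hstepSub k (G k).1 (G k).2
  refine ⟨(G (k+1)).1.1 ∩ (G k).1.1, (G (k+1)).1.1 ∩ (G k).1.2, ?_,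
    Set.inter_subset_right, Set.inter_subset_right⟩
  rw [← Set.inter_union_distrib_left]
  exact (Set.inter_eq_left.2 hsub).symm
end
end

section
/- Let Λ be a finite set, X a compact metrizable space, and let ψ_k : X → Λ^ℤ be continuous maps (for the product topology) converging to a map ψ : X → Λ^ℤ both pointwise with respect to the product topology and uniformly with respect to the family (d_N)_N, i.e. sup_{x∈X} d_N(ψ_k x, ψ x) → 0 as N,k → ∞. Then the closure of ψ(X) in the product topology is contained in the d_∞-saturation ψ(X)^∞ := {y ∈ Λ^ℤ : ∃ x ∈ X, d_∞(y, ψ(x)) = 0}. -/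
open MeasureTheory Filter Topology Set
open scoped ENNReal NNReal Classical

noncomputable section

open Krieger

namespace Krieger
variable {Λ : Type*}

lemma window_finite (n : ℕ) (p : ℤ → Prop) : {i : ℤ | i.natAbs ≤ n ∧ p i}.Finite :=
  (Set.finite_Icc (-(n:ℤ)) n).subset fun i hi => by
    simp only [Set.mem_Icc]; have := hi.1; omega

lemma window_card_le (n : ℕ) (p : ℤ → Prop) :
    Nat.card ↥{i : ℤ | i.natAbs ≤ n ∧ p i} ≤ 2 * n + 1 := by
  rw [Nat.card_coe_set_eq]
  calc {i : ℤ | i.natAbs ≤ n ∧ p i}.ncard ≤ (Set.Icc (-(n:ℤ)) n).ncard :=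
        Set.ncard_le_ncard (fun i hi => by simp only [Set.mem_Icc]; have := hi.1; omega)
          (Set.finite_Icc _ _)
    _ = 2 * n + 1 := by
        rw [← Finset.coe_Icc, Set.ncard_coe_finset, Int.card_Icc]; omega

lemma dN_bddAbove (N : ℕ) (x y : ℤ → Λ) :
    BddAbove (Set.range fun n : {m : ℕ // N ≤ m} =>
      (Nat.card ↥{i : ℤ | i.natAbs ≤ (n:ℕ) ∧ x i ≠ y i} : ℝ) / (2 * (n:ℕ) + 1)) := by
  refine ⟨1, fun r hr => ?_⟩
  obtain ⟨n, rfl⟩ := hr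
  have hd : (0:ℝ) < 2 * (n:ℕ) + 1 := by positivity
  rw [div_le_one hd]
  exact_mod_cast window_card_le (n:ℕ) _

lemma le_dN {N n : ℕ} (h : N ≤ n) (x y : ℤ → Λ) :
    (Nat.card ↥{i : ℤ | i.natAbs ≤ n ∧ x i ≠ y i} : ℝ) / (2 * n + 1) ≤ dN N x y :=
  le_ciSup (dN_bddAbove N x y) ⟨n, h⟩

lemma dN_le {N : ℕ} {x y : ℤ → Λ} {c : ℝ}
    (h : ∀ n, N ≤ n →
      (Nat.card ↥{i : ℤ | i.natAbs ≤ n ∧ x i ≠ y i} : ℝ) / (2 * n + 1) ≤ c) :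
    dN N x y ≤ c := by
  haveI : Nonempty {m : ℕ // N ≤ m} := ⟨⟨N, le_rfl⟩⟩
  exact ciSup_le fun n => h n n.2

lemma dN_nonneg (N : ℕ) (x y : ℤ → Λ) : 0 ≤ dN N x y :=
  Real.iSup_nonneg fun n => by positivity

lemma dB_nonneg (x y : ℤ → Λ) : 0 ≤ dB x y :=
  le_ciInf fun N => dN_nonneg N x y

lemma dB_le_dN (N : ℕ) (x y : ℤ → Λ) : dB x y ≤ dN N x y :=
  ciInf_le ⟨0, fun _ ⟨M, hM⟩ => hM ▸ dN_nonneg M x y⟩ N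

lemma tendsto_eventually_eq' {α β : Type*} [TopologicalSpace β] [DiscreteTopology β]
    {f : α → β} {l : Filter α} {b : β} (h : Tendsto f l (𝓝 b)) : ∀ᶠ a in l, f a = b :=
  h.eventually (Filter.eventually_of_mem ((isOpen_discrete {b}).mem_nhds rfl) fun _ hb => hb)

end Krieger

/-- If the continuous maps `ψ_k` converge to `ψ` pointwise for the product
topology and uniformly with respect to the family `(d_N)_N`, then the closure of `ψ(X)` is
contained in the `d_∞`-saturation of `ψ(X)`. -/
theorem statement_8 {Λ : Type*} [Fintype Λ] [TopologicalSpace Λ] [DiscreteTopology Λ]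
    {X : Type*} [MetricSpace X] [CompactSpace X]
    (ψ : X → ℤ → Λ) (ψk : ℕ → X → ℤ → Λ)
    (hcont : ∀ k, Continuous (ψk k))
    (hpt : ∀ x : X, Filter.Tendsto (fun k : ℕ => ψk k x) Filter.atTop (nhds (ψ x)))
    (hdN : ∀ ε > (0:ℝ), ∃ K₀ M : ℕ, ∀ k ≥ K₀, ∀ N ≥ M, ∀ x : X, dN N (ψk k x) (ψ x) ≤ ε) :
    closure (Set.range ψ) ⊆ {y : ℤ → Λ | ∃ x : X, dB y (ψ x) = 0} := by
  intro y hy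
  -- extract a sequence in the image converging to y
  obtain ⟨u, hu_mem, hu_lim⟩ := mem_closure_iff_seq_limit.mp hy
  choose z hz using hu_mem
  -- compactness: convergent subsequence of preimages
  obtain ⟨x, -, φ, hφ, hxlim⟩ := isCompact_univ.tendsto_subseq (fun m => Set.mem_univ (z m))
  refine ⟨x, le_antisymm ?_ (dB_nonneg y (ψ x))⟩
  refine le_of_forall_pos_le_add fun ε hε => ?_
  obtain ⟨K₀, M, hKM⟩ := hdN (ε/2) (half_pos hε)
  have hmain : dN M y (ψ x) ≤ ε := by
    refine dN_le fun n hn => ?_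
    have hd : (0:ℝ) < 2 * (n:ℝ) + 1 := by positivity
    -- eventual agreement on the window [-n, n]
    have h1 : Tendsto (fun j => u (φ j)) atTop (𝓝 y) := hu_lim.comp hφ.tendsto_atTop
    have h2 : Tendsto (fun j => ψk K₀ (z (φ j))) atTop (𝓝 (ψk K₀ x)) :=
      ((hcont K₀).continuousAt.tendsto).comp (hxlim)
    have hev : ∀ᶠ j in atTop, ∀ i ∈ Finset.Icc (-(n:ℤ)) (n:ℤ),
        u (φ j) i = y i ∧ ψk K₀ (z (φ j)) i = ψk K₀ x i := by
      rw [Filter.eventually_all_finset]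
      intro i _
      have e1 : ∀ᶠ j in atTop, u (φ j) i = y i :=
        tendsto_eventually_eq' (tendsto_pi_nhds.mp h1 i)
      have e2 : ∀ᶠ j in atTop, ψk K₀ (z (φ j)) i = ψk K₀ x i :=
        tendsto_eventually_eq' (tendsto_pi_nhds.mp h2 i)
      exact e1.and e2
    obtain ⟨j, hj⟩ := hev.exists
    set w := z (φ j) with hw
    have hψw : ψ w = u (φ j) := hz (φ j)
    -- identify the first difference set on the window
    have hA : {i : ℤ | i.natAbs ≤ n ∧ y i ≠ ψk K₀ x i}
        = {i : ℤ | i.natAbs ≤ n ∧ ψk K₀ w i ≠ ψ w i} := by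
      ext i
      simp only [Set.mem_setOf_eq]
      constructor
      · rintro ⟨hi, hne⟩
        have him : i ∈ Finset.Icc (-(n:ℤ)) (n:ℤ) := by simp only [Finset.mem_Icc]; omega
        obtain ⟨hji, hji2⟩ := hj i him
        refine ⟨hi, fun h => hne ?_⟩
        rw [← hji, ← hψw] at *
        rw [← hji2]
        exact h.symm
      · rintro ⟨hi, hne⟩
        have him : i ∈ Finset.Icc (-(n:ℤ)) (n:ℤ) := by simp only [Finset.mem_Icc]; omega
        obtain ⟨hji, hji2⟩ := hj i him
        refine ⟨hi, fun h => hne ?_⟩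
        rw [hψw, hji, h, ← hji2]
    -- triangle inequality on counts
    have hsub : {i : ℤ | i.natAbs ≤ n ∧ y i ≠ ψ x i}
        ⊆ {i : ℤ | i.natAbs ≤ n ∧ y i ≠ ψk K₀ x i}
          ∪ {i : ℤ | i.natAbs ≤ n ∧ ψk K₀ x i ≠ ψ x i} := by
      rintro i ⟨hi, hne⟩
      by_cases h : y i = ψk K₀ x i
      · right; exact ⟨hi, fun h2 => hne (h.trans h2)⟩
      · left; exact ⟨hi, h⟩
    have hcard : Nat.card ↥{i : ℤ | i.natAbs ≤ n ∧ y i ≠ ψ x i}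
        ≤ Nat.card ↥{i : ℤ | i.natAbs ≤ n ∧ y i ≠ ψk K₀ x i}
          + Nat.card ↥{i : ℤ | i.natAbs ≤ n ∧ ψk K₀ x i ≠ ψ x i} := by
      rw [Nat.card_coe_set_eq, Nat.card_coe_set_eq, Nat.card_coe_set_eq]
      calc {i : ℤ | i.natAbs ≤ n ∧ y i ≠ ψ x i}.ncard
          ≤ ({i : ℤ | i.natAbs ≤ n ∧ y i ≠ ψk K₀ x i}
              ∪ {i : ℤ | i.natAbs ≤ n ∧ ψk K₀ x i ≠ ψ x i}).ncard :=
            Set.ncard_le_ncard hsub ((window_finite n _).union (window_finite n _))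
        _ ≤ _ := Set.ncard_union_le _ _
    have hB : (Nat.card ↥{i : ℤ | i.natAbs ≤ n ∧ ψk K₀ x i ≠ ψ x i} : ℝ) / (2 * n + 1)
        ≤ ε / 2 :=
      (le_dN hn (ψk K₀ x) (ψ x)).trans (hKM K₀ le_rfl M le_rfl x)
    have hA' : (Nat.card ↥{i : ℤ | i.natAbs ≤ n ∧ y i ≠ ψk K₀ x i} : ℝ) / (2 * n + 1)
        ≤ ε / 2 := by
      rw [hA]
      exact (le_dN hn (ψk K₀ w) (ψ w)).trans (hKM K₀ le_rfl M le_rfl w)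
    calc (Nat.card ↥{i : ℤ | i.natAbs ≤ n ∧ y i ≠ ψ x i} : ℝ) / (2 * n + 1)
        ≤ ((Nat.card ↥{i : ℤ | i.natAbs ≤ n ∧ y i ≠ ψk K₀ x i}
            + Nat.card ↥{i : ℤ | i.natAbs ≤ n ∧ ψk K₀ x i ≠ ψ x i} : ℕ) : ℝ)
            / (2 * n + 1) := by gcongr
      _ = (Nat.card ↥{i : ℤ | i.natAbs ≤ n ∧ y i ≠ ψk K₀ x i} : ℝ) / (2 * n + 1)
            + (Nat.card ↥{i : ℤ | i.natAbs ≤ n ∧ ψk K₀ x i ≠ ψ x i} : ℝ) / (2 * n + 1) := by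
          push_cast; ring
      _ ≤ ε / 2 + ε / 2 := add_le_add hA' hB
      _ = ε := by ring
  linarith [dB_le_dN M y (ψ x)]
end
end

section
/- Let Λ be a finite set, let T be a homeomorphism of a compact metrizable space X, and let ψ, ψ_k : X → Λ^ℤ be Borel equivariant maps (ψ ∘ T = σ ∘ ψ and ψ_k ∘ T = σ ∘ ψ_k) such that sup_{x∈X} d_∞(ψ_k x, ψ x) → 0 as k → ∞. Then the induced maps ψ_k* : M(X,T) → M(Λ^ℤ,σ) converge uniformly on M(X,T) to ψ* with respect to the metric d_*. -/
open MeasureTheory Filter Topology Set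
open scoped ENNReal NNReal Classical

noncomputable section

open Krieger

section AuxiliaryLemmas

lemma aux_set_filter (n : ℕ) (P : ℤ → Prop) :
    {i : ℤ | i.natAbs ≤ n ∧ P i} = ↑((Finset.Icc (-(n:ℤ)) n).filter P) := by
  ext i
  simp only [Set.mem_setOf_eq, Finset.coe_filter, Finset.mem_Icc]
  constructor
  · rintro ⟨h, hP⟩; exact ⟨by omega, hP⟩
  · rintro ⟨h, hP⟩; exact ⟨by omega, hP⟩

lemma aux_natcard (n : ℕ) (P : ℤ → Prop) :
    (Nat.card ↥{i : ℤ | i.natAbs ≤ n ∧ P i}) = ((Finset.Icc (-(n:ℤ)) n).filter P).card := by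
  rw [Nat.card_coe_set_eq, aux_set_filter, Set.ncard_coe_finset]

lemma aux_card_le (n : ℕ) (P : ℤ → Prop) :
    (Nat.card ↥{i : ℤ | i.natAbs ≤ n ∧ P i}) ≤ 2 * n + 1 := by
  rw [aux_natcard]
  calc ((Finset.Icc (-(n:ℤ)) n).filter P).card ≤ (Finset.Icc (-(n:ℤ)) n).card :=
        Finset.card_filter_le _ _
    _ = 2 * n + 1 := by rw [Int.card_Icc]; omega

lemma aux_G_eq {X : Type*} (Sets : ℤ → Set X) (n : ℕ) (x : X) :
    ((Nat.card ↥{i : ℤ | i.natAbs ≤ n ∧ x ∈ Sets i} : ℕ) : ℝ≥0∞)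
      = ∑ i ∈ Finset.Icc (-(n:ℤ)) n, (Sets i).indicator (fun _ => (1:ℝ≥0∞)) x := by
  rw [aux_natcard, Finset.card_filter]
  push_cast
  refine Finset.sum_congr rfl fun i _ => ?_
  simp [Set.indicator_apply]

lemma aux_meas_diff {Λ X : Type*} [MeasurableSpace Λ] [MeasurableSpace X]
    [Countable Λ] [MeasurableSingletonClass Λ]
    {φ χ : X → ℤ → Λ} (hφ : Measurable φ) (hχ : Measurable χ) (i : ℤ) :
    MeasurableSet {x | φ x i ≠ χ x i} := by
  have h1 : Measurable fun x => φ x i := (measurable_pi_apply i).comp hφ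
  have h2 : Measurable fun x => χ x i := (measurable_pi_apply i).comp hχ
  have heq : {x | φ x i = χ x i} = ⋃ a : Λ, ((fun x => φ x i) ⁻¹' {a} ∩ (fun x => χ x i) ⁻¹' {a}) := by
    ext x
    simp only [Set.mem_setOf_eq, Set.mem_iUnion, Set.mem_inter_iff, Set.mem_preimage,
      Set.mem_singleton_iff]
    exact ⟨fun h => ⟨χ x i, h, rfl⟩, fun ⟨a, ha1, ha2⟩ => ha1.trans ha2.symm⟩
  have : MeasurableSet {x | φ x i = χ x i} := by
    rw [heq]
    exact MeasurableSet.iUnion fun a =>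
      ((h1 (measurableSet_singleton a))).inter (h2 (measurableSet_singleton a))
  exact this.compl

lemma aux_const {Λ X : Type*} [MeasurableSpace Λ] [MeasurableSpace X]
    [Countable Λ] [MeasurableSingletonClass Λ]
    (T : X → X) (ψ φ : X → ℤ → Λ) (hψ : Measurable ψ) (hφ : Measurable φ)
    (hequiv : ∀ x, ψ (T x) = shift (ψ x)) (hequivφ : ∀ x, φ (T x) = shift (φ x))
    (μ : ProbabilityMeasure X) (hμ : μ ∈ invProb T) (i : ℤ) :
    μ.toMeasure {x | φ x i ≠ ψ x i} = μ.toMeasure {x | φ x 0 ≠ ψ x 0} := by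
  set S : ℤ → Set X := fun i => {x | φ x i ≠ ψ x i} with hSdef
  have hmeas : ∀ i, MeasurableSet (S i) := fun i => aux_meas_diff hφ hψ i
  have hstep : ∀ i, S (i + 1) = T ⁻¹' S i := by
    intro i; ext x
    simp only [hSdef, Set.mem_setOf_eq, Set.mem_preimage, hequiv, hequivφ, shift]
  have hrec : ∀ i, μ.toMeasure (S (i + 1)) = μ.toMeasure (S i) := fun i => by
    rw [hstep i]; exact hμ (S i) (hmeas i)
  induction i using Int.induction_on with
  | zero => rfl
  | succ n ih => rw [hrec n, ih]
  | pred n ih =>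
    have h2 := hrec (-(n : ℤ) - 1)
    norm_num at h2
    rw [← h2]; exact ih

lemma aux_key {Λ : Type*} [MeasurableSpace Λ] [Countable Λ] [MeasurableSingletonClass Λ]
    {X : Type*} [MeasurableSpace X]
    (T : X → X) (ψ φ : X → ℤ → Λ)
    (hψ : Measurable ψ) (hφ : Measurable φ)
    (hequiv : ∀ x, ψ (T x) = shift (ψ x))
    (hequivφ : ∀ x, φ (T x) = shift (φ x))
    (μ : ProbabilityMeasure X) (hμ : μ ∈ invProb T)
    (ε : ℝ) (hε : 0 ≤ ε) (h : ∀ x, dB (φ x) (ψ x) ≤ ε) :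
    μ.toMeasure {x | φ x 0 ≠ ψ x 0} ≤ ENNReal.ofReal ε := by
  set S : ℤ → Set X := fun i => {x | φ x i ≠ ψ x i} with hSdef
  have hmeas : ∀ i, MeasurableSet (S i) := fun i => aux_meas_diff hφ hψ i
  have hconst : ∀ i, μ.toMeasure (S i) = μ.toMeasure (S 0) :=
    fun i => aux_const T ψ φ hψ hφ hequiv hequivφ μ hμ i
  set G : ℕ → X → ℝ≥0∞ := fun n x =>
    ((Nat.card ↥{i : ℤ | i.natAbs ≤ n ∧ x ∈ S i} : ℕ) : ℝ≥0∞) * (((2 * n + 1 : ℕ)) : ℝ≥0∞)⁻¹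
    with hGdef
  have hGx : ∀ n x, G n x =
      ((Nat.card ↥{i : ℤ | i.natAbs ≤ n ∧ x ∈ S i} : ℕ) : ℝ≥0∞)
        * (((2 * n + 1 : ℕ)) : ℝ≥0∞)⁻¹ := fun n x => rfl
  have hGsum : ∀ n, G n = fun x =>
      (∑ i ∈ Finset.Icc (-(n:ℤ)) n, (S i).indicator (fun _ => (1:ℝ≥0∞)) x)
        * (((2 * n + 1 : ℕ)) : ℝ≥0∞)⁻¹ := fun n => funext fun x => by
    rw [hGx, aux_G_eq]
  have hden0 : ∀ n : ℕ, (((2 * n + 1 : ℕ)) : ℝ≥0∞) ≠ 0 := fun n =>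
    Nat.cast_ne_zero.mpr (by omega)
  have hdent : ∀ n : ℕ, (((2 * n + 1 : ℕ)) : ℝ≥0∞) ≠ ∞ := fun n => ENNReal.natCast_ne_top _
  have hsummeas : ∀ n : ℕ, Measurable fun x =>
      (∑ i ∈ Finset.Icc (-(n:ℤ)) n, (S i).indicator (fun _ => (1:ℝ≥0∞)) x) :=
    fun n => Finset.measurable_sum _ fun i _ => measurable_const.indicator (hmeas i)
  have hGmeas : ∀ n, Measurable (G n) := by
    intro n
    rw [hGsum n]
    exact (hsummeas n).mul_const _
  have hGbound : ∀ n x, G n x ≤ 1 := by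
    intro n x
    rw [hGx]
    calc ((Nat.card ↥{i : ℤ | i.natAbs ≤ n ∧ x ∈ S i} : ℕ) : ℝ≥0∞) * (((2*n+1:ℕ)):ℝ≥0∞)⁻¹
        ≤ (((2*n+1:ℕ)):ℝ≥0∞) * (((2*n+1:ℕ)):ℝ≥0∞)⁻¹ := by
          gcongr
          exact_mod_cast aux_card_le n _
      _ = 1 := ENNReal.mul_inv_cancel (hden0 n) (hdent n)
  have hint : ∀ n, ∫⁻ x, G n x ∂μ.toMeasure = μ.toMeasure (S 0) := by
    intro n
    rw [hGsum n]
    rw [lintegral_mul_const _ (hsummeas n),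
      lintegral_finset_sum _ (fun i _ => measurable_const.indicator (hmeas i))]
    have heach : ∀ i ∈ Finset.Icc (-(n:ℤ)) n,
        ∫⁻ x, (S i).indicator (fun _ => (1:ℝ≥0∞)) x ∂μ.toMeasure = μ.toMeasure (S 0) := by
      intro i _
      rw [lintegral_indicator_const (hmeas i), one_mul, hconst]
    rw [Finset.sum_congr rfl heach, Finset.sum_const, Int.card_Icc]
    have hcard : (((n:ℤ) + 1 - -(n:ℤ)).toNat) = 2 * n + 1 := by omega
    rw [hcard, nsmul_eq_mul, mul_comm ((2*n+1 : ℕ) : ℝ≥0∞), mul_assoc,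
      ENNReal.mul_inv_cancel (hden0 n) (hdent n), mul_one]
  have hpt : ∀ x, limsup (fun n => G n x) atTop ≤ ENNReal.ofReal ε := by
    intro x
    refine ENNReal.le_of_forall_pos_le_add fun η hη _ => ?_
    have hηR : (0:ℝ) < η := hη
    have hlt : dB (φ x) (ψ x) < ε + η := lt_of_le_of_lt (h x) (lt_add_of_pos_right _ hηR)
    obtain ⟨N, hN⟩ := exists_lt_of_ciInf_lt hlt
    have hev : ∀ n, N ≤ n → G n x ≤ ENNReal.ofReal (ε + η) := by
      intro n hn
      have hbdd : BddAbove (Set.range fun m : {m : ℕ // N ≤ m} =>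
          (Nat.card ↥{i : ℤ | i.natAbs ≤ (m:ℕ) ∧ φ x i ≠ ψ x i} : ℝ) / (2 * (m:ℕ) + 1)) := by
        refine ⟨1, ?_⟩
        rintro r ⟨m, rfl⟩
        have h1 : (Nat.card ↥{i : ℤ | i.natAbs ≤ (m:ℕ) ∧ φ x i ≠ ψ x i} : ℝ) ≤ 2 * (m:ℕ) + 1 := by
          exact_mod_cast aux_card_le (m:ℕ) _
        have h2 : (0:ℝ) < 2 * (m:ℕ) + 1 := by positivity
        rw [div_le_one h2]; exact h1
      have hle : (Nat.card ↥{i : ℤ | i.natAbs ≤ n ∧ φ x i ≠ ψ x i} : ℝ) / (2 * n + 1)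
          ≤ dN N (φ x) (ψ x) := le_ciSup hbdd ⟨n, hn⟩
      have hposd : (0:ℝ) < 2 * (n:ℕ) + 1 := by positivity
      have hle3 : (Nat.card ↥{i : ℤ | i.natAbs ≤ n ∧ φ x i ≠ ψ x i} : ℝ)
          ≤ (ε + η) * (2 * n + 1) := (div_le_iff₀ hposd).mp (hle.trans hN.le)
      have key : ((Nat.card ↥{i : ℤ | i.natAbs ≤ n ∧ x ∈ S i} : ℕ) : ℝ≥0∞)
          ≤ ENNReal.ofReal (ε + η) * (((2*n+1:ℕ)) : ℝ≥0∞) := by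
        rw [← ENNReal.ofReal_natCast (Nat.card ↥{i : ℤ | i.natAbs ≤ n ∧ x ∈ S i}),
          ← ENNReal.ofReal_natCast (2*n+1),
          ← ENNReal.ofReal_mul (add_nonneg hε hηR.le)]
        apply ENNReal.ofReal_le_ofReal
        push_cast
        exact hle3
      rw [hGx]
      calc ((Nat.card ↥{i : ℤ | i.natAbs ≤ n ∧ x ∈ S i} : ℕ) : ℝ≥0∞) * (((2*n+1:ℕ)):ℝ≥0∞)⁻¹
          ≤ (ENNReal.ofReal (ε + η) * (((2*n+1:ℕ)) : ℝ≥0∞)) * (((2*n+1:ℕ)):ℝ≥0∞)⁻¹ := by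
            gcongr
        _ = ENNReal.ofReal (ε + η) := by
            rw [mul_assoc, ENNReal.mul_inv_cancel (hden0 n) (hdent n), mul_one]
    calc limsup (fun n => G n x) atTop ≤ ENNReal.ofReal (ε + η) :=
          limsup_le_of_le (by isBoundedDefault) (eventually_atTop.mpr ⟨N, hev⟩)
      _ = ENNReal.ofReal ε + (η : ℝ≥0∞) := by
          rw [ENNReal.ofReal_add hε hηR.le, ENNReal.ofReal_coe_nnreal]
  calc μ.toMeasure (S 0) = limsup (fun n => ∫⁻ x, G n x ∂μ.toMeasure) atTop := by
        simp only [hint]; exact (limsup_const _).symm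
    _ ≤ ∫⁻ x, limsup (fun n => G n x) atTop ∂μ.toMeasure :=
        limsup_lintegral_le (fun _ => (1:ℝ≥0∞)) hGmeas
          (fun n => ae_of_all _ (hGbound n)) (by simp [lintegral_one])
    _ ≤ ∫⁻ _, ENNReal.ofReal ε ∂μ.toMeasure := lintegral_mono hpt
    _ = ENNReal.ofReal ε := by simp

lemma aux_abs_sub {X : Type*} [MeasurableSpace X] (μ : Measure X) [IsFiniteMeasure μ]
    (s t u : Set X) (h1 : s \ t ⊆ u) (h2 : t \ s ⊆ u) :
    |(μ s).toReal - (μ t).toReal| ≤ (μ u).toReal := by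
  have key : ∀ p q : Set X, p \ q ⊆ u → (μ p).toReal ≤ (μ q).toReal + (μ u).toReal := by
    intro p q hpq
    have hsub : p ⊆ q ∪ u := by
      intro x hx
      by_cases hx2 : x ∈ q
      · exact Or.inl hx2
      · exact Or.inr (hpq ⟨hx, hx2⟩)
    have hle : μ p ≤ μ q + μ u := (measure_mono hsub).trans (measure_union_le q u)
    have := ENNReal.toReal_mono (by finiteness) hle
    rwa [ENNReal.toReal_add (measure_ne_top μ q) (measure_ne_top μ u)] at this
  rw [abs_sub_le_iff]
  constructor
  · linarith [key s t h1]
  · linarith [key t s h2]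

lemma aux_cyl_meas {Λ : Type*} [MeasurableSpace Λ] [MeasurableSingletonClass Λ]
    (N : ℕ) (w : ℕ → Λ) :
    MeasurableSet {y : ℤ → Λ | ∀ i : ℕ, i < N → y (i:ℤ) = w i} := by
  have heq : {y : ℤ → Λ | ∀ i : ℕ, i < N → y (i:ℤ) = w i}
      = ⋂ i ∈ Set.Iio N, (fun y : ℤ → Λ => y (i:ℤ)) ⁻¹' {w i} := by
    ext y; simp [Set.mem_iInter]
  rw [heq]
  exact MeasurableSet.biInter (Set.to_countable _)
    fun i _ => (measurable_pi_apply _) (measurableSet_singleton _)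

lemma aux_cyl_bound {Λ X : Type*} [MeasurableSpace Λ] [MeasurableSpace X]
    [Countable Λ] [MeasurableSingletonClass Λ]
    (T : X → X) (ψ φ : X → ℤ → Λ) (hψ : Measurable ψ) (hφ : Measurable φ)
    (hequiv : ∀ x, ψ (T x) = shift (ψ x)) (hequivφ : ∀ x, φ (T x) = shift (φ x))
    (μ : ProbabilityMeasure X) (hμ : μ ∈ invProb T) (N : ℕ) (w : ℕ → Λ) :
    |(μ.toMeasure (φ ⁻¹' {y : ℤ → Λ | ∀ i : ℕ, i < N → y (i:ℤ) = w i})).toReal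
      - (μ.toMeasure (ψ ⁻¹' {y : ℤ → Λ | ∀ i : ℕ, i < N → y (i:ℤ) = w i})).toReal|
      ≤ (N : ℝ) * (μ.toMeasure {x | φ x 0 ≠ ψ x 0}).toReal := by
  set C : Set (ℤ → Λ) := {y : ℤ → Λ | ∀ i : ℕ, i < N → y (i:ℤ) = w i} with hC
  set u : Set X := ⋃ i ∈ Finset.range N, {x | φ x (i:ℤ) ≠ ψ x (i:ℤ)} with hu
  have hsub : ∀ χ₁ χ₂ : X → ℤ → Λ,
      (∀ i : ℕ, i < N → ∀ x : X, ({x | χ₁ x (i:ℤ) ≠ χ₂ x (i:ℤ)} : Set X) ⊆ u) →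
      χ₁ ⁻¹' C \ χ₂ ⁻¹' C ⊆ u := by
    intro χ₁ χ₂ hincl x hx
    obtain ⟨h1, h2⟩ := hx
    simp only [hC, Set.mem_preimage, Set.mem_setOf_eq, not_forall] at h1 h2
    obtain ⟨i, hiN, hne⟩ := h2
    refine hincl i hiN x ?_
    simp only [Set.mem_setOf_eq]
    intro heq
    exact hne (heq ▸ h1 i hiN)
  have hincl1 : ∀ i : ℕ, i < N → ∀ x : X,
      ({x | φ x (i:ℤ) ≠ ψ x (i:ℤ)} : Set X) ⊆ u := by
    intro i hiN x y hy
    exact Set.mem_biUnion (Finset.mem_range.mpr hiN) hy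
  have hincl2 : ∀ i : ℕ, i < N → ∀ x : X,
      ({x | ψ x (i:ℤ) ≠ φ x (i:ℤ)} : Set X) ⊆ u := by
    intro i hiN x y hy
    exact hincl1 i hiN x (by simpa [ne_comm] using hy)
  have habs := aux_abs_sub μ.toMeasure (φ ⁻¹' C) (ψ ⁻¹' C) u
    (hsub φ ψ hincl1) (hsub ψ φ hincl2)
  refine habs.trans ?_
  have hmu : μ.toMeasure u ≤ (N : ℝ≥0∞) * μ.toMeasure {x | φ x 0 ≠ ψ x 0} := by
    refine le_trans (measure_biUnion_finset_le _ _) ?_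
    have heach : ∀ i ∈ Finset.range N,
        μ.toMeasure {x | φ x (i:ℤ) ≠ ψ x (i:ℤ)}
          = μ.toMeasure {x | φ x 0 ≠ ψ x 0} :=
      fun i _ => aux_const T ψ φ hψ hφ hequiv hequivφ μ hμ i
    rw [Finset.sum_congr rfl heach, Finset.sum_const, Finset.card_range, nsmul_eq_mul]
  have := ENNReal.toReal_mono (by finiteness) hmu
  refine this.trans ?_
  rw [ENNReal.toReal_mul]
  simp

lemma aux_push_apply {X Y : Type*} [MeasurableSpace X] [MeasurableSpace Y]
    (φ : X → Y) (hφ : Measurable φ) (μ : ProbabilityMeasure X) (s : Set Y)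
    (hs : MeasurableSet s) :
    ((pushPM φ μ s : ℝ≥0) : ℝ) = (μ.toMeasure (φ ⁻¹' s)).toReal := by
  have hdp : pushPM φ μ = ⟨μ.toMeasure.map φ, Measure.isProbabilityMeasure_map hφ.aemeasurable⟩ :=
    dif_pos hφ.aemeasurable
  rw [hdp, ProbabilityMeasure.mk_apply,
    Measure.map_apply hφ hs]
  rfl

end AuxiliaryLemmas

/-- If the Borel equivariant maps `ψ_k` converge to the Borel equivariant
map `ψ` uniformly with respect to `d_∞`, then the induced maps `ψ_k*` converge uniformly to
`ψ*` on `M(X,T)` with respect to the metric `d_*`. -/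
theorem statement_9 {Λ : Type*} [Fintype Λ] [TopologicalSpace Λ] [DiscreteTopology Λ]
    [MeasurableSpace Λ] [BorelSpace Λ]
    {X : Type*} [MetricSpace X] [CompactSpace X] [MeasurableSpace X] [BorelSpace X]
    (T : X ≃ₜ X) (ψ : X → ℤ → Λ) (ψk : ℕ → X → ℤ → Λ)
    (hψ : Measurable ψ) (hψk : ∀ k, Measurable (ψk k))
    (hequiv : ∀ x, ψ (T x) = shift (ψ x))
    (hequivk : ∀ k x, ψk k (T x) = shift (ψk k x))
    (hconv : ∀ ε > (0:ℝ), ∃ K₀ : ℕ, ∀ k ≥ K₀, ∀ x : X, dB (ψk k x) (ψ x) ≤ ε) :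
    ∀ A : ℕ → Set (ℤ → Λ), IsCylEnum A →
      ∀ ε > (0:ℝ), ∃ K₀ : ℕ, ∀ k ≥ K₀, ∀ μ : ↥(invProb ⇑T),
        dStar A (inducedMap ⇑T (ψk k) μ) (inducedMap ⇑T ψ μ) ≤ ε := by
  intro A hA ε hε
  haveI hsc : MeasurableSingletonClass Λ :=
    ⟨fun a => (isOpen_discrete ({a} : Set Λ)).measurableSet⟩
  choose Nn wn hNw using hA.1
  have hAmeas : ∀ n, MeasurableSet (A n) := fun n => by
    rw [hNw n]; exact aux_cyl_meas (Nn n) (wn n)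
  obtain ⟨M, hM⟩ : ∃ M : ℕ, (1/2:ℝ)^M < ε/4 :=
    exists_pow_lt_of_lt_one (by linarith) (by norm_num)
  set Cst : ℝ := ∑ n ∈ Finset.range M, (Nn n : ℝ) with hCst
  have hCst0 : (0:ℝ) ≤ Cst := Finset.sum_nonneg fun n _ => by positivity
  set ε' : ℝ := ε / (4 * (Cst + 1)) with hε'def
  have hε' : 0 < ε' := div_pos hε (by linarith)
  obtain ⟨K₀, hK⟩ := hconv ε' hε'
  refine ⟨K₀, fun k hk μ => ?_⟩
  set a : ℝ := ((μ : ProbabilityMeasure X).toMeasure {x | ψk k x 0 ≠ ψ x 0}).toReal with ha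
  have ha0 : 0 ≤ a := ENNReal.toReal_nonneg
  have hale : a ≤ ε' := ENNReal.toReal_le_of_le_ofReal hε'.le
    (aux_key ⇑T ψ (ψk k) hψ (hψk k) hequiv (hequivk k) μ.1 μ.2 ε' hε'.le (hK k hk))
  set f : ℕ → ℝ := fun n =>
    |(((inducedMap ⇑T (ψk k) μ) (A n) : ℝ≥0) : ℝ)
      - (((inducedMap ⇑T ψ μ) (A n) : ℝ≥0) : ℝ)| / 2 ^ n with hf
  have hfval : ∀ n, (((inducedMap ⇑T (ψk k) μ) (A n) : ℝ≥0) : ℝ)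
      = ((μ : ProbabilityMeasure X).toMeasure ((ψk k) ⁻¹' (A n))).toReal :=
    fun n => aux_push_apply _ (hψk k) μ.1 _ (hAmeas n)
  have hgval : ∀ n, (((inducedMap ⇑T ψ μ) (A n) : ℝ≥0) : ℝ)
      = ((μ : ProbabilityMeasure X).toMeasure (ψ ⁻¹' (A n))).toReal :=
    fun n => aux_push_apply _ hψ μ.1 _ (hAmeas n)
  have htle1 : ∀ s : Set X, ((μ : ProbabilityMeasure X).toMeasure s).toReal ≤ 1 := by
    intro s
    refine ENNReal.toReal_le_of_le_ofReal zero_le_one ?_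
    rw [ENNReal.ofReal_one]
    exact prob_le_one
  have hf0 : ∀ n, 0 ≤ f n := fun n => by simp only [hf]; positivity
  have hfle_geo : ∀ n, f n ≤ (1/2:ℝ)^n := by
    intro n
    simp only [hf]
    have hnum : |(((inducedMap ⇑T (ψk k) μ) (A n) : ℝ≥0) : ℝ)
        - (((inducedMap ⇑T ψ μ) (A n) : ℝ≥0) : ℝ)| ≤ 1 := by
      rw [hfval, hgval]
      rw [abs_sub_le_iff]
      constructor
      · linarith [htle1 ((ψk k) ⁻¹' (A n)), ENNReal.toReal_nonneg
          (a := (μ : ProbabilityMeasure X).toMeasure (ψ ⁻¹' (A n)))]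
      · linarith [htle1 (ψ ⁻¹' (A n)), ENNReal.toReal_nonneg
          (a := (μ : ProbabilityMeasure X).toMeasure ((ψk k) ⁻¹' (A n)))]
    calc _ ≤ (1:ℝ) / 2^n := by gcongr
      _ = (1/2:ℝ)^n := by rw [div_pow, one_pow]
  have hfleNa : ∀ n, f n ≤ (Nn n : ℝ) * a := by
    intro n
    have hnum : |(((inducedMap ⇑T (ψk k) μ) (A n) : ℝ≥0) : ℝ)
        - (((inducedMap ⇑T ψ μ) (A n) : ℝ≥0) : ℝ)| ≤ (Nn n : ℝ) * a := by
      rw [hfval, hgval, hNw n, ha]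
      exact aux_cyl_bound ⇑T ψ (ψk k) hψ (hψk k) hequiv (hequivk k) μ.1 μ.2 (Nn n) (wn n)
    simp only [hf]
    calc _ ≤ ((Nn n : ℝ) * a) / 2^n := by gcongr
      _ ≤ (Nn n : ℝ) * a := div_le_self (by positivity) (one_le_pow₀ (by norm_num))
  have hsum : Summable f := Summable.of_nonneg_of_le hf0 hfle_geo summable_geometric_two
  have hgeo_shift : Summable fun n : ℕ => (1/2:ℝ)^(n+M) :=
    (summable_nat_add_iff M).2 summable_geometric_two
  have hsplit : ∑ n ∈ Finset.range M, f n + ∑' n : ℕ, f (n + M) = ∑' n, f n :=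
    hsum.sum_add_tsum_nat_add M
  have hhead : ∑ n ∈ Finset.range M, f n ≤ ε/4 := by
    calc ∑ n ∈ Finset.range M, f n ≤ ∑ n ∈ Finset.range M, (Nn n : ℝ) * a :=
          Finset.sum_le_sum fun n _ => hfleNa n
      _ = Cst * a := by rw [hCst, Finset.sum_mul]
      _ ≤ Cst * ε' := mul_le_mul_of_nonneg_left hale hCst0
      _ ≤ (Cst + 1) * ε' := mul_le_mul_of_nonneg_right (by linarith) hε'.le
      _ = ε/4 := by rw [hε'def]; field_simp
  have htail : ∑' n : ℕ, f (n + M) ≤ ε/2 := by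
    calc ∑' n : ℕ, f (n + M) ≤ ∑' n : ℕ, (1/2:ℝ)^(n+M) :=
          Summable.tsum_le_tsum (fun n => hfle_geo (n + M)) ((summable_nat_add_iff M).2 hsum) hgeo_shift
      _ = (∑' n : ℕ, (1/2:ℝ)^n) * (1/2:ℝ)^M := by
          simp_rw [pow_add]
          exact tsum_mul_right
      _ = 2 * (1/2:ℝ)^M := by rw [tsum_geometric_two]
      _ ≤ 2 * (ε/4) := by linarith
      _ = ε/2 := by ring
  have : dStar A (inducedMap ⇑T (ψk k) μ) (inducedMap ⇑T ψ μ) = ∑' n, f n := rfl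
  rw [this, ← hsplit]
  linarith
end
end

section
/- Let (X,T) be a topological dynamical system satisfying: (i) limsup_n (1/n) log #Per_n(X,T) < log K; (ii) #Per_n(X,T) ≤ #Per_n({1,…,K}^ℤ,σ) for every integer n ≥ 1. Then for every sufficiently large integer n₁ there exists an injective equivariant map ψ : ⋃_{n ≤ n₁} Per_n(X,T) → {1,…,K}^ℤ such that the map ψ^{n₁} sending x to the word (ψ(x)_0, ψ(x)_1, …, ψ(x)_{n₁−1}) ∈ {1,…,K}^{n₁} is also injective. -/
open MeasureTheory Filter Topology Set
open scoped ENNReal NNReal Classical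

noncomputable section

open Krieger

/- ========================================================================
   Auxiliary lemmas for the proof of statement 12.
   ======================================================================== -/

namespace Krieger

open Filter Function

section ShiftBasics

variable {Λ : Type*}

lemma shift_iterate (z : ℤ → Λ) (k : ℕ) : shift^[k] z = fun i => z (i + k) := by
  induction k with
  | zero => simp
  | succ k ih =>
    rw [Function.iterate_succ_apply', ih]
    funext i
    show z (i + 1 + (k:ℤ)) = z (i + ((k + 1 : ℕ):ℤ))
    congr 1
    push_cast
    ring

lemma shift_injective : Function.Injective (shift (Λ := Λ)) := by
  intro a b h
  funext i
  have := congrFun h (i - 1)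
  simpa [shift] using this

lemma per_of_isPeriodic {z : ℤ → Λ} {n : ℕ} (h : IsPeriodicPt shift n z) :
    ∀ i, z (i + n) = z i := by
  intro i
  have : (shift^[n] z) i = z i := congrFun h i
  rwa [shift_iterate] at this

lemma isPeriodic_of_per {z : ℤ → Λ} {n : ℕ} (h : ∀ i, z (i + n) = z i) :
    IsPeriodicPt shift n z := by
  show shift^[n] z = z
  rw [shift_iterate]
  funext i
  exact h i

lemma per_mul {z : ℤ → Λ} {n : ℕ} (h : ∀ i, z (i + n) = z i) :
    ∀ (t : ℤ) (i : ℤ), z (i + t * n) = z i := by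
  intro t
  induction t using Int.induction_on with
  | zero => simp
  | succ k ih =>
    intro i
    have e : i + (k + 1 : ℤ) * n = (i + k * n) + n := by ring
    rw [e, h (i + k * n), ih i]
  | pred k ih =>
    intro i
    have e : (i + (-(k : ℤ) - 1) * n) + n = i + (-(k : ℤ)) * n := by ring
    have h2 := h (i + (-(k : ℤ) - 1) * n)
    rw [e] at h2
    rw [← h2]
    exact ih i

lemma per_emod {z : ℤ → Λ} {n : ℕ} (h : ∀ i, z (i + n) = z i) (i : ℤ) :
    z i = z (i % n) := by
  conv_lhs => rw [← Int.emod_add_mul_ediv i n]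
  rw [mul_comm]
  exact per_mul h (i / n) (i % n)

lemma per_congr {z : ℤ → Λ} {n : ℕ} (h : ∀ i, z (i + n) = z i) {a b : ℤ}
    (hab : a % n = b % n) : z a = z b := by
  rw [per_emod h a, per_emod h b, hab]

/-- the window of length `n₁`. -/
def win (Λ : Type*) (n₁ : ℕ) (z : ℤ → Λ) : Fin n₁ → Λ := fun i => z ((i : ℕ) : ℤ)

lemma leastPer_shift_per {z : ℤ → Λ} {n : ℕ} (hz : z ∈ leastPer shift n) :
    ∀ i, z (i + n) = z i := by
  have h : IsPeriodicPt shift n z := hz ▸ Function.isPeriodicPt_minimalPeriod shift z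
  exact per_of_isPeriodic h

lemma win_eq_on_nat {n₁ : ℕ} {z y : ℤ → Λ} (hw : win Λ n₁ z = win Λ n₁ y) :
    ∀ j : ℤ, 0 ≤ j → j < n₁ → z j = y j := by
  intro j h0 hj
  have : j = ((j.toNat : ℕ) : ℤ) := (Int.toNat_of_nonneg h0).symm
  rw [this]
  have hlt : j.toNat < n₁ := by omega
  exact congrFun hw ⟨j.toNat, hlt⟩

lemma win_injOn {n n₁ : ℕ} (h1 : 1 ≤ n) (h2 : n ≤ n₁) :
    Set.InjOn (win Λ n₁) (leastPer shift n) := by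
  intro z hz y hy hw
  have hzp := leastPer_shift_per hz
  have hyp := leastPer_shift_per hy
  funext i
  have hn0 : ((n:ℤ)) ≠ 0 := Int.natCast_ne_zero.mpr (by omega)
  have h0 : 0 ≤ i % n := Int.emod_nonneg i hn0
  have hlt : i % n < n := Int.emod_lt_of_pos i (by exact_mod_cast (by omega : 0 < n))
  have e1 : z i = z (i % n) := per_emod hzp i
  have e2 : y i = y (i % n) := per_emod hyp i
  have e3 : z (i % n) = y (i % n) :=
    win_eq_on_nat hw (i % n) h0 (lt_of_lt_of_le hlt (by exact_mod_cast h2))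
  rw [e1, e2, e3]

lemma cross {n m n₁ : ℕ} (hm : 1 ≤ m) (hmn : m < n) (hsum : n + m ≤ n₁)
    {z y : ℤ → Λ} (hz : z ∈ leastPer shift n) (hy : y ∈ leastPer shift m)
    (hw : win Λ n₁ z = win Λ n₁ y) : False := by
  have hzp := leastPer_shift_per hz
  have hyp := leastPer_shift_per hy
  have key : ∀ i : ℤ, z (i + m) = z i := by
    intro i
    have hn0 : (0:ℤ) < n := by exact_mod_cast (by omega : 0 < n)
    have h0 : 0 ≤ i % n := Int.emod_nonneg i hn0.ne'
    have hr : i % n < n := Int.emod_lt_of_pos i hn0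
    have e1 : z (i + m) = z (i % n + m) := by
      refine per_congr hzp ?_
      conv_lhs => rw [Int.add_emod]
      conv_rhs => rw [Int.add_emod, Int.emod_emod_of_dvd _ dvd_rfl]
    have e2 : z (i % n + m) = y (i % n + m) :=
      win_eq_on_nat hw _ (by omega) (by push_cast; omega)
    have e3 : y (i % n + m) = y (i % n) := hyp (i % n)
    have e4 : y (i % n) = z (i % n) :=
      (win_eq_on_nat hw _ h0 (by push_cast; omega)).symm
    have e5 : z (i % n) = z i := (per_emod hzp i).symm
    rw [e1, e2, e3, e4, e5]
  have hper : IsPeriodicPt shift m z := isPeriodic_of_per key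
  have hle : Function.minimalPeriod shift z ≤ m := hper.minimalPeriod_le (by omega)
  rw [hz] at hle
  omega

end ShiftBasics

section Orbits

variable {α : Type*} {f : α → α}

/-- The forward orbit of a point of least period `n`, as a `Finset`. -/
noncomputable def orbitF (f : α → α) (a : α) (n : ℕ) : Finset α :=
  letI := Classical.decEq α
  (Finset.range n).image (fun k => f^[k] a)

lemma iterate_inj (hf : Injective f) {a : α} {n : ℕ} (hmp : minimalPeriod f a = n) :
    ∀ i < n, ∀ j < n, f^[i] a = f^[j] a → i = j := by
  have key : ∀ i j, i < j → j < n → f^[i] a ≠ f^[j] a := by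
    intro i j hij hj h
    have h1 : f^[i] (f^[j - i] a) = f^[i] a := by
      rw [← Function.iterate_add_apply]
      rw [show i + (j - i) = j by omega]
      exact h.symm
    have h2 : f^[j - i] a = a := (hf.iterate i) h1
    have h3 : minimalPeriod f a ≤ j - i :=
      Function.IsPeriodicPt.minimalPeriod_le (by omega) h2
    omega
  intro i hi j hj h
  rcases lt_trichotomy i j with hc | hc | hc
  · exact absurd h (key i j hc hj)
  · exact hc
  · exact absurd h.symm (key j i hc hi)

lemma iterate_min_per {a : α} {n : ℕ} (hmp : minimalPeriod f a = n) (hn : 1 ≤ n) :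
    f^[n] a = a := by
  have := Function.isPeriodicPt_minimalPeriod f a
  rwa [hmp] at this

lemma mem_orbitF_self {a : α} {n : ℕ} (hn : 1 ≤ n) : a ∈ orbitF f a n := by
  simp only [orbitF, Finset.mem_image]
  exact ⟨0, by simpa using by omega, rfl⟩

lemma iterate_mul_per {a : α} {n : ℕ} (hmp : minimalPeriod f a = n) (hn : 1 ≤ n) :
    ∀ t : ℕ, f^[n * t] a = a := by
  intro t
  induction t with
  | zero => simp
  | succ t ih =>
    rw [show n * (t+1) = n * t + n by ring, Function.iterate_add_apply,
      iterate_min_per hmp hn, ih]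

lemma iterate_mod_per {a : α} {n : ℕ} (hmp : minimalPeriod f a = n) (hn : 1 ≤ n) (k : ℕ) :
    f^[k] a = f^[k % n] a := by
  conv_lhs => rw [show k = k % n + n * (k / n) from (Nat.mod_add_div k n).symm]
  rw [Function.iterate_add_apply, iterate_mul_per hmp hn]

lemma mem_orbitF_iterate {a : α} {n : ℕ} (hmp : minimalPeriod f a = n) (hn : 1 ≤ n) (k : ℕ) :
    f^[k] a ∈ orbitF f a n := by
  classical
  rw [iterate_mod_per hmp hn]
  simp only [orbitF, Finset.mem_image, Finset.mem_range]
  exact ⟨k % n, Nat.mod_lt _ (by omega), rfl⟩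

lemma orbitF_fwd {a : α} {n : ℕ} (hmp : minimalPeriod f a = n) (hn : 1 ≤ n) :
    ∀ x ∈ orbitF f a n, f x ∈ orbitF f a n := by
  classical
  intro x hx
  simp only [orbitF, Finset.mem_image, Finset.mem_range] at hx
  obtain ⟨k, hk, rfl⟩ := hx
  have h := (Function.iterate_succ_apply' f k a).symm
  rw [h]
  exact mem_orbitF_iterate hmp hn (k+1)

lemma orbitF_bwd (hf : Injective f) {a : α} {n : ℕ} (hmp : minimalPeriod f a = n)
    (hn : 1 ≤ n) : ∀ x, f x ∈ orbitF f a n → x ∈ orbitF f a n := by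
  classical
  intro x hx
  simp only [orbitF, Finset.mem_image, Finset.mem_range] at hx
  obtain ⟨k, hk, hkx⟩ := hx
  rcases Nat.eq_zero_or_pos k with hk0 | hk0
  · subst hk0
    have h1 : f (f^[n-1] a) = f x := by
      have e : f (f^[n-1] a) = f^[(n-1)+1] a := (Function.iterate_succ_apply' f (n-1) a).symm
      rw [e, show (n-1)+1 = n by omega, iterate_min_per hmp hn]
      simpa using hkx
    rw [← hf h1]
    exact mem_orbitF_iterate hmp hn (n-1)
  · have h1 : f (f^[k-1] a) = f x := by
      have e : f (f^[k-1] a) = f^[(k-1)+1] a := (Function.iterate_succ_apply' f (k-1) a).symm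
      rw [e, show (k-1)+1 = k by omega]
      exact hkx
    rw [← hf h1]
    exact mem_orbitF_iterate hmp hn (k-1)

lemma orbitF_card (hf : Injective f) {a : α} {n : ℕ} (hmp : minimalPeriod f a = n) :
    (orbitF f a n).card = n := by
  classical
  rw [orbitF]
  rw [Finset.card_image_of_injOn]
  · exact Finset.card_range n
  · intro i hi j hj h
    exact iterate_inj hf hmp i (Finset.mem_range.mp hi) j (Finset.mem_range.mp hj) h

lemma minimalPeriod_iterate (hf : Injective f) {a : α} (hpos : 0 < minimalPeriod f a)
    (k : ℕ) : minimalPeriod f (f^[k] a) = minimalPeriod f a := by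
  induction k with
  | zero => rfl
  | succ k ih =>
    rw [Function.iterate_succ_apply']
    rw [Function.minimalPeriod_apply, ih]
    rw [← Function.minimalPeriod_pos_iff_mem_periodicPts, ih]
    exact hpos

end Orbits

section Inj

variable {α β : Type*}

lemma orbitF_mem_iff {f : α → α} {a x : α} {n : ℕ} :
    x ∈ orbitF f a n ↔ ∃ k, k < n ∧ f^[k] a = x := by
  classical
  simp only [orbitF, Finset.mem_image, Finset.mem_range]

/-- Key lemma: an equivariant injection between finite invariant sets of points of least
period `n`, built orbit by orbit. -/
lemma inj_code (f : α → α) (g : β → β) (hf : Injective f) (hg : Injective g)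
    [Nonempty β] (n : ℕ) (hn : 1 ≤ n) :
    ∀ (N : ℕ) (A : Finset α) (B : Finset β), A.card = N →
    (∀ x ∈ A, minimalPeriod f x = n) → (∀ z ∈ B, minimalPeriod g z = n) →
    (∀ x ∈ A, f x ∈ A) → (∀ z ∈ B, g z ∈ B) → A.card ≤ B.card →
    ∃ φ : α → β, (∀ x ∈ A, φ x ∈ B) ∧ (∀ x ∈ A, φ (f x) = g (φ x)) ∧
      Set.InjOn φ ↑A := by
  classical
  intro N
  induction N using Nat.strong_induction_on with
  | _ N ih =>
    intro A B hAcard hAm hBm hAi hBi hAB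
    rcases A.eq_empty_or_nonempty with hA | ⟨a, ha⟩
    · exact ⟨fun _ => Classical.arbitrary β, by simp [hA], by simp [hA], by simp [hA]⟩
    have hmpa : minimalPeriod f a = n := hAm a ha
    set OA := orbitF f a n with hOA
    have hOAsub : OA ⊆ A := by
      intro x hx
      rw [orbitF_mem_iff] at hx
      obtain ⟨k, hk, rfl⟩ := hx
      clear hk
      induction k with
      | zero => simpa using ha
      | succ k ihk => rw [Function.iterate_succ_apply']; exact hAi _ ihk
    have hOAcard : OA.card = n := orbitF_card hf hmpa
    have hBne : B.Nonempty := by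
      rw [← Finset.card_pos]
      have : 0 < A.card := Finset.card_pos.mpr ⟨a, ha⟩
      omega
    obtain ⟨b, hb⟩ := hBne
    have hmpb : minimalPeriod g b = n := hBm b hb
    set OB := orbitF g b n with hOB
    have hOBsub : OB ⊆ B := by
      intro z hz
      rw [orbitF_mem_iff] at hz
      obtain ⟨k, hk, rfl⟩ := hz
      clear hk
      induction k with
      | zero => simpa using hb
      | succ k ihk => rw [Function.iterate_succ_apply']; exact hBi _ ihk
    have hOBcard : OB.card = n := orbitF_card hg hmpb
    have hA'card : (A \ OA).card = N - n := by
      rw [Finset.card_sdiff_of_subset hOAsub, hOAcard, hAcard]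
    have hB'card : (B \ OB).card = B.card - n := by
      rw [Finset.card_sdiff_of_subset hOBsub, hOBcard]
    have hnN : n ≤ N := by
      rw [← hAcard, ← hOAcard]
      exact Finset.card_le_card hOAsub
    obtain ⟨φ', hφ'B, hφ'eq, hφ'inj⟩ :=
      ih (N - n) (by omega) (A \ OA) (B \ OB) hA'card
        (fun x hx => hAm x (Finset.mem_sdiff.mp hx).1)
        (fun z hz => hBm z (Finset.mem_sdiff.mp hz).1)
        (fun x hx => by
          rcases Finset.mem_sdiff.mp hx with ⟨hx1, hx2⟩
          refine Finset.mem_sdiff.mpr ⟨hAi x hx1, fun hc => hx2 ?_⟩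
          exact orbitF_bwd hf hmpa hn x hc)
        (fun z hz => by
          rcases Finset.mem_sdiff.mp hz with ⟨hz1, hz2⟩
          refine Finset.mem_sdiff.mpr ⟨hBi z hz1, fun hc => hz2 ?_⟩
          exact orbitF_bwd hg hmpb hn z hc)
        (by omega)
    have hposx : ∀ x ∈ OA, ∃ k, k < n ∧ f^[k] a = x := fun x hx => orbitF_mem_iff.mp hx
    set pos : α → ℕ := fun x =>
      if h : ∃ k, k < n ∧ f^[k] a = x then h.choose else 0 with hpos
    have hposspec : ∀ x ∈ OA, pos x < n ∧ f^[pos x] a = x := by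
      intro x hx
      have h := hposx x hx
      simp only [hpos, dif_pos h]
      exact h.choose_spec
    have hposuniq : ∀ x ∈ OA, ∀ k, k < n → f^[k] a = x → k = pos x := by
      intro x hx k hk hkx
      have hs := hposspec x hx
      exact iterate_inj hf hmpa k hk (pos x) hs.1 (hkx.trans hs.2.symm)
    set φ : α → β := fun x => if x ∈ OA then g^[pos x] b else φ' x with hφ
    have hφOB : ∀ x ∈ OA, φ x ∈ OB := by
      intro x hx
      simp only [hφ, if_pos hx]
      exact mem_orbitF_iterate hmpb hn (pos x)
    refine ⟨φ, ?_, ?_, ?_⟩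
    · intro x hx
      by_cases hxO : x ∈ OA
      · exact hOBsub (hφOB x hxO)
      · simp only [hφ, if_neg hxO]
        exact (Finset.mem_sdiff.mp (hφ'B x (Finset.mem_sdiff.mpr ⟨hx, hxO⟩))).1
    · intro x hx
      by_cases hxO : x ∈ OA
      · have hfxO : f x ∈ OA := orbitF_fwd hmpa hn x hxO
        simp only [hφ, if_pos hxO, if_pos hfxO]
        obtain ⟨hklt, hkx⟩ := hposspec x hxO
        rcases Nat.lt_or_ge (pos x + 1) n with hlt | hge
        · have : pos (f x) = pos x + 1 := by
            refine (hposuniq (f x) hfxO (pos x + 1) hlt ?_).symm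
            rw [Function.iterate_succ_apply', hkx]
          rw [this, Function.iterate_succ_apply']
        · have hx1 : pos x + 1 = n := by omega
          have hfa : f x = a := by
            have e : f (f^[pos x] a) = f^[pos x + 1] a :=
              (Function.iterate_succ_apply' f (pos x) a).symm
            rw [← hkx, e, hx1, iterate_min_per hmpa hn]
          have : pos (f x) = 0 := by
            refine (hposuniq (f x) hfxO 0 (by omega) ?_).symm
            simpa using hfa.symm
          rw [this]
          show b = g (g^[pos x] b)
          have e : g (g^[pos x] b) = g^[pos x + 1] b :=
            (Function.iterate_succ_apply' g (pos x) b).symm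
          rw [e, hx1, iterate_min_per hmpb hn]
      · have hfxO : f x ∉ OA := fun hc => hxO (orbitF_bwd hf hmpa hn x hc)
        have hxA' : x ∈ A \ OA := Finset.mem_sdiff.mpr ⟨hx, hxO⟩
        simp only [hφ, if_neg hxO, if_neg hfxO]
        exact hφ'eq x hxA'
    · intro x hx y hy hxy
      simp only [Finset.coe_sort_coe, Finset.mem_coe] at hx hy
      by_cases hxO : x ∈ OA <;> by_cases hyO : y ∈ OA
      · simp only [hφ, if_pos hxO, if_pos hyO] at hxy
        obtain ⟨hkx, hx2⟩ := hposspec x hxO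
        obtain ⟨hky, hy2⟩ := hposspec y hyO
        have := iterate_inj hg hmpb (pos x) hkx (pos y) hky hxy
        rw [← hx2, ← hy2, this]
      · exfalso
        have h1 : φ x ∈ OB := hφOB x hxO
        have h2 : φ y ∈ B \ OB := by
          simp only [hφ, if_neg hyO]
          exact hφ'B y (Finset.mem_sdiff.mpr ⟨hy, hyO⟩)
        rw [hxy] at h1
        exact (Finset.mem_sdiff.mp h2).2 h1
      · exfalso
        have h1 : φ y ∈ OB := hφOB y hyO
        have h2 : φ x ∈ B \ OB := by
          simp only [hφ, if_neg hxO]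
          exact hφ'B x (Finset.mem_sdiff.mpr ⟨hx, hxO⟩)
        rw [← hxy] at h1
        exact (Finset.mem_sdiff.mp h2).2 h1
      · refine hφ'inj ?_ ?_ ?_
        · simpa using Finset.mem_sdiff.mpr ⟨hx, hxO⟩
        · simpa using Finset.mem_sdiff.mpr ⟨hy, hyO⟩
        · simpa only [hφ, if_neg hxO, if_neg hyO] using hxy

end Inj

section Card

variable {Λ : Type*}

/-- The set of sequences of period (dividing) `n`. -/
def perZ (Λ : Type*) (n : ℕ) : Set (ℤ → Λ) := {z | ∀ i : ℤ, z (i + n) = z i}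

/-- Sequences of period `n` are determined by `n` coordinates. -/
noncomputable def perZEquiv (Λ : Type*) (n : ℕ) (hn : 0 < n) : ↥(perZ Λ n) ≃ (Fin n → Λ) where
  toFun z := fun i => z.1 ((i : ℕ) : ℤ)
  invFun w := ⟨fun i => w ⟨(i % n).toNat, by
      have h1 : 0 ≤ i % n := Int.emod_nonneg i (by exact_mod_cast hn.ne')
      have h2 : i % n < n := Int.emod_lt_of_pos i (by exact_mod_cast hn)
      omega⟩, by
    intro i
    have h : (i + (n:ℤ)) % n = i % n := Int.add_mul_emod_self_left i n 1 ▸ (by ring_nf)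
    exact congrArg w (Fin.ext (by
      show (((i + (n:ℤ)) % n).toNat) = ((i % (n:ℤ)).toNat)
      rw [h]))⟩
  left_inv z := by
    ext i
    show z.1 (((i % n).toNat : ℕ) : ℤ) = z.1 i
    have h1 : 0 ≤ i % n := Int.emod_nonneg i (by exact_mod_cast hn.ne')
    rw [Int.toNat_of_nonneg h1]
    exact (per_emod z.2 i).symm
  right_inv w := by
    funext i
    show w ⟨((((i : ℕ) : ℤ)) % n).toNat, _⟩ = w i
    congr 1
    have : ((i : ℕ) : ℤ) % n = ((i : ℕ) : ℤ) := Int.emod_eq_of_lt (by positivity)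
      (by exact_mod_cast i.2)
    simp [this]

lemma perZ_finite [Finite Λ] {n : ℕ} (hn : 0 < n) : (perZ Λ n).Finite := by
  rw [← Set.finite_coe_iff]
  exact Finite.of_equiv _ (perZEquiv Λ n hn).symm

lemma perZ_ncard {K n : ℕ} (hn : 0 < n) : (perZ (Fin K) n).ncard = K ^ n := by
  rw [← Nat.card_coe_set_eq, Nat.card_congr (perZEquiv (Fin K) n hn),
    Nat.card_eq_fintype_card, Fintype.card_fun]
  simp

lemma leastPer_subset_perZ {n : ℕ} : leastPer (shift : (ℤ → Λ) → _) n ⊆ perZ Λ n := by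
  intro z hz
  exact per_of_isPeriodic (hz ▸ Function.isPeriodicPt_minimalPeriod shift z)

lemma leastPer_shift_finite [Finite Λ] {n : ℕ} (hn : 0 < n) :
    (leastPer (shift : (ℤ → Λ) → _) n).Finite :=
  (perZ_finite hn).subset leastPer_subset_perZ

lemma leastPer_shift_card_le {K n : ℕ} (hn : 0 < n) :
    (leastPer (shift : (ℤ → Fin K) → _) n).ncard ≤ K ^ n := by
  rw [← perZ_ncard hn]
  exact Set.ncard_le_ncard leastPer_subset_perZ (perZ_finite hn)

/-- card bound for a finite bounded union. -/
lemma ncard_biUnion_le {ι γ : Type*} (s : Finset ι) (t : ι → Set γ)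
    (ht : ∀ i ∈ s, (t i).Finite) :
    (⋃ i ∈ s, t i).ncard ≤ ∑ i ∈ s, (t i).ncard := by
  classical
  induction s using Finset.induction_on with
  | empty => simp
  | insert x s' hx ih =>
    rw [Finset.sum_insert hx]
    have : (⋃ i ∈ insert x s', t i) = t x ∪ ⋃ i ∈ s', t i := by
      simp [Set.biUnion_insert]
    rw [this]
    refine le_trans (Set.ncard_union_le _ _) ?_
    exact Nat.add_le_add_left (ih (fun i hi => ht i (Finset.mem_insert_of_mem hi))) _

lemma geom_sum_le {K : ℕ} (hK : 2 ≤ K) (D : ℕ) :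
    ∑ d ∈ Finset.Icc 1 D, K ^ d ≤ K ^ (D + 1) := by
  induction D with
  | zero => simp
  | succ D ih =>
    rw [Finset.sum_Icc_succ_top (by omega : 1 ≤ D + 1)]
    calc (∑ d ∈ Finset.Icc 1 D, K ^ d) + K ^ (D+1) ≤ K ^ (D+1) + K ^ (D+1) := by omega
    _ ≤ K ^ (D+2) := by
      have : K ^ (D + 2) = K * K ^ (D+1) := by ring
      rw [this]
      nlinarith [pow_pos (by omega : 0 < K) (D+1)]

lemma leastPer_shift_card_lower {K n : ℕ} (hn : 0 < n) (hK : 2 ≤ K) :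
    K ^ n ≤ (leastPer (shift : (ℤ → Fin K) → _) n).ncard + K ^ (n / 2 + 1) := by
  set LP := leastPer (shift : (ℤ → Fin K) → _) n
  have hsub : perZ (Fin K) n \ LP ⊆ ⋃ d ∈ Finset.Icc 1 (n / 2), perZ (Fin K) d := by
    rintro z ⟨hz, hz2⟩
    have hper : IsPeriodicPt shift n z := isPeriodic_of_per hz
    have hd1 : Function.minimalPeriod shift z ∣ n := hper.minimalPeriod_dvd
    have hd2 : 0 < Function.minimalPeriod shift z := hper.minimalPeriod_pos hn
    have hd3 : Function.minimalPeriod shift z ≠ n := hz2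
    have hd4 : Function.minimalPeriod shift z ≤ n / 2 := by
      obtain ⟨t, ht⟩ := hd1
      have h2t : 2 ≤ t := by
        rcases Nat.lt_or_ge t 2 with h | h
        · interval_cases t <;> omega
        · exact h
      have : Function.minimalPeriod shift z * 2 ≤ n := by nlinarith
      omega
    simp only [Set.mem_iUnion]
    exact ⟨Function.minimalPeriod shift z, by simp [Finset.mem_Icc]; omega,
      per_of_isPeriodic (Function.isPeriodicPt_minimalPeriod shift z)⟩
  have hcub : (perZ (Fin K) n \ LP).ncard ≤ K ^ (n / 2 + 1) := by
    refine le_trans (Set.ncard_le_ncard hsub ?_) ?_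
    · exact Set.Finite.biUnion (Finset.finite_toSet _)
        (fun d hd => perZ_finite (by simp [Finset.mem_Icc] at hd; omega))
    · refine le_trans (ncard_biUnion_le _ _
        (fun d hd => perZ_finite (by simp [Finset.mem_Icc] at hd; omega))) ?_
      calc ∑ d ∈ Finset.Icc 1 (n/2), (perZ (Fin K) d).ncard
          = ∑ d ∈ Finset.Icc 1 (n/2), K ^ d := by
            refine Finset.sum_congr rfl (fun d hd => ?_)
            exact perZ_ncard (by simp [Finset.mem_Icc] at hd; omega)
        _ ≤ K ^ (n/2 + 1) := geom_sum_le hK _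
  have hdiff : (perZ (Fin K) n \ LP).ncard = K ^ n - LP.ncard := by
    rw [Set.ncard_diff leastPer_subset_perZ (leastPer_shift_finite hn), perZ_ncard hn]
  have hle : LP.ncard ≤ K ^ n := leastPer_shift_card_le hn
  omega

end Card

section Analytic

lemma exists_N1 (K : ℕ) (hK : 2 ≤ K) (E C : ℝ) (hE1 : 1 ≤ E) (hEK : E < K) (hC : 1 ≤ C) :
    ∃ N₁ : ℕ, ∀ m : ℕ, N₁ ≤ m →
      E ^ m + (m : ℝ) * (C * m * E ^ m) + (K : ℝ) ^ (m / 2 + 1) ≤ (K : ℝ) ^ m := by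
  have hK0 : (0:ℝ) < K := by positivity
  have hK1 : (1:ℝ) < K := by exact_mod_cast (by omega : 1 < K)
  set s : ℝ := Real.sqrt K with hs
  have hs0 : 0 ≤ s := Real.sqrt_nonneg _
  have hs2 : s ^ 2 = K := Real.sq_sqrt hK0.le
  have hs1 : 1 ≤ s := by nlinarith
  have hsK : s < K := by nlinarith
  have hE0 : 0 < E := by linarith
  have hr1 : 0 ≤ E / K := by positivity
  have hr2 : E / K < 1 := (div_lt_one hK0).mpr hEK
  have hq1 : 0 ≤ s / K := by positivity
  have hq2 : s / K < 1 := (div_lt_one hK0).mpr hsK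
  have t1 : Tendsto (fun m : ℕ => (E/K) ^ m) atTop (nhds 0) :=
    tendsto_pow_atTop_nhds_zero_of_lt_one hr1 hr2
  have t2 : Tendsto (fun m : ℕ => C * ((m:ℝ) ^ 2 * (E/K) ^ m)) atTop (nhds 0) := by
    have := (tendsto_pow_const_mul_const_pow_of_lt_one 2 hr1 hr2).const_mul C
    simpa using this
  have t3 : Tendsto (fun m : ℕ => (K:ℝ) * (s/K) ^ m) atTop (nhds 0) := by
    have := (tendsto_pow_atTop_nhds_zero_of_lt_one hq1 hq2).const_mul (K:ℝ)
    simpa using this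
  have tu : Tendsto (fun m : ℕ =>
      (E/K) ^ m + C * ((m:ℝ) ^ 2 * (E/K) ^ m) + (K:ℝ) * (s/K) ^ m) atTop (nhds 0) := by
    have := (t1.add t2).add t3
    simpa using this
  have hev := tu.eventually_lt_const (one_pos)
  obtain ⟨N₁, hN₁⟩ := eventually_atTop.mp hev
  refine ⟨N₁, fun m hm => ?_⟩
  have hu := hN₁ m hm
  have hKm : (0:ℝ) < (K:ℝ) ^ m := by positivity
  have key : ((E/K) ^ m + C * ((m:ℝ) ^ 2 * (E/K) ^ m) + (K:ℝ) * (s/K) ^ m) * (K:ℝ) ^ m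
      ≤ (K:ℝ) ^ m := by
    nlinarith
  have e1 : (E/K) ^ m * (K:ℝ) ^ m = E ^ m := by
    rw [div_pow, div_mul_eq_mul_div, mul_div_assoc, div_self (by positivity), mul_one]
  have e2 : (s/K) ^ m * (K:ℝ) ^ m = s ^ m := by
    rw [div_pow, div_mul_eq_mul_div, mul_div_assoc, div_self (by positivity), mul_one]
  have hKhalf : (K:ℝ) ^ (m / 2 + 1) ≤ (K:ℝ) * s ^ m := by
    have h1 : (K:ℝ) ^ (m / 2 + 1) = (K:ℝ) * ((K:ℝ) ^ (m/2)) := by ring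
    have h2 : (K:ℝ) ^ (m/2) = s ^ (2 * (m/2)) := by
      rw [pow_mul, hs2]
    have h3 : s ^ (2 * (m/2)) ≤ s ^ m := pow_le_pow_right₀ hs1 (by omega)
    rw [h1, h2]
    nlinarith
  calc E ^ m + (m : ℝ) * (C * m * E ^ m) + (K : ℝ) ^ (m / 2 + 1)
      ≤ E ^ m + C * ((m:ℝ)^2 * E ^ m) + (K:ℝ) * s ^ m := by
        refine add_le_add (le_of_eq (by ring)) hKhalf
    _ = ((E/K) ^ m + C * ((m:ℝ) ^ 2 * (E/K) ^ m) + (K:ℝ) * (s/K) ^ m) * (K:ℝ) ^ m := by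
        rw [add_mul, add_mul, e1]
        rw [show C * ((m:ℝ) ^ 2 * (E/K) ^ m) * (K:ℝ)^m
            = C * ((m:ℝ)^2 * ((E/K)^m * (K:ℝ)^m)) by ring, e1]
        rw [show (K:ℝ) * (s/K) ^ m * (K:ℝ)^m = (K:ℝ) * ((s/K)^m * (K:ℝ)^m) by ring, e2]
    _ ≤ (K:ℝ) ^ m := key

lemma limsup_pos_extract (f : ℕ → ℝ) (hf : ∀ n, 0 ≤ f n) (b : ℝ)
    (hb : ∀ n, 1 ≤ n → f n ≤ b) {L : ℝ} (hL : Filter.limsup f Filter.atTop < L) :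
    0 < L ∧ ∃ c, 0 < c ∧ c < L ∧ ∃ N : ℕ, ∀ n ≥ N, f n < c := by
  have hbdd : Filter.IsBoundedUnder (· ≤ ·) Filter.atTop f :=
    ⟨b, eventually_map.mpr (eventually_atTop.mpr ⟨1, hb⟩)⟩
  have h0 : 0 ≤ Filter.limsup f Filter.atTop := by
    rw [Filter.limsup_eq]
    rcases Set.eq_empty_or_nonempty {a | ∀ᶠ n in atTop, f n ≤ a} with he | hne
    · rw [he, Real.sInf_empty]
    · refine le_csInf hne ?_
      intro a ha
      obtain ⟨N, hN⟩ := eventually_atTop.mp ha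
      exact le_trans (hf N) (hN N le_rfl)
  refine ⟨by linarith, (Filter.limsup f Filter.atTop + L)/2, by linarith, by linarith, ?_⟩
  have h2 := Filter.eventually_lt_of_limsup_lt
    (show Filter.limsup f Filter.atTop < (Filter.limsup f Filter.atTop + L)/2 by linarith) hbdd
  exact eventually_atTop.mp h2

end Analytic

end Krieger

set_option maxHeartbeats 1600000 in
/-- Coding of periodic points: for all sufficiently large `n₁` there is an
injective equivariant map `ψ` from the points of least period at most `n₁` into the `K`-full
shift whose restriction `ψ^{n₁}` to the first `n₁` coordinates is still injective. -/
theorem statement_12 {X : Type*} [MetricSpace X] [CompactSpace X]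
    (K : ℕ) (T : X ≃ₜ X)
    (hgrowth : Filter.limsup
      (fun n : ℕ => Real.log (Nat.card ↥(leastPer ⇑T n)) / n) Filter.atTop < Real.log K)
    (hcard : ∀ n : ℕ, 1 ≤ n →
      Nonempty (↥(leastPer ⇑T n) ↪ ↥(leastPer (shift : (ℤ → Fin K) → ℤ → Fin K) n))) :
    ∃ N₀ : ℕ, ∀ n₁ ≥ N₀, ∃ ψ : X → ℤ → Fin K,
      Set.InjOn ψ {x | 1 ≤ Function.minimalPeriod ⇑T x ∧ Function.minimalPeriod ⇑T x ≤ n₁} ∧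
      (∀ x ∈ {x | 1 ≤ Function.minimalPeriod ⇑T x ∧ Function.minimalPeriod ⇑T x ≤ n₁},
        ψ (T x) = shift (ψ x)) ∧
      Set.InjOn (fun x => fun i : Fin n₁ => ψ x ((i : ℕ) : ℤ))
        {x | 1 ≤ Function.minimalPeriod ⇑T x ∧ Function.minimalPeriod ⇑T x ≤ n₁} := by
  classical
  have hTinj : Function.Injective ⇑T := T.injective
  have hSinj : Function.Injective (shift : (ℤ → Fin K) → ℤ → Fin K) := shift_injective
  -- finiteness and cardinality facts
  have hAfinite : ∀ n : ℕ, 1 ≤ n → (leastPer ⇑T n).Finite := by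
    intro n hn
    obtain ⟨e⟩ := hcard n hn
    haveI : Finite ↥(leastPer (shift : (ℤ → Fin K) → ℤ → Fin K) n) :=
      (leastPer_shift_finite (by omega)).to_subtype
    have : Finite ↥(leastPer ⇑T n) := Finite.of_injective e e.injective
    exact Set.finite_coe_iff.mp this
  have hAcardLP : ∀ n : ℕ, 1 ≤ n →
      (leastPer ⇑T n).ncard ≤ (leastPer (shift : (ℤ → Fin K) → ℤ → Fin K) n).ncard := by
    intro n hn
    obtain ⟨e⟩ := hcard n hn
    haveI : Finite ↥(leastPer (shift : (ℤ → Fin K) → ℤ → Fin K) n) :=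
      (leastPer_shift_finite (by omega)).to_subtype
    rw [← Nat.card_coe_set_eq, ← Nat.card_coe_set_eq]
    exact Nat.card_le_card_of_injective e e.injective
  have hAcardK : ∀ n : ℕ, 1 ≤ n → (leastPer ⇑T n).ncard ≤ K ^ n := fun n hn =>
    le_trans (hAcardLP n hn) (leastPer_shift_card_le (by omega))
  -- the growth function
  set f : ℕ → ℝ := fun n => Real.log (Nat.card ↥(leastPer ⇑T n)) / n with hfdef
  have hf0 : ∀ n, 0 ≤ f n := fun n =>
    div_nonneg (Real.log_natCast_nonneg _) (Nat.cast_nonneg n)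
  have hfb : ∀ n, 1 ≤ n → f n ≤ Real.log K := by
    intro n hn
    have hcard' : (Nat.card ↥(leastPer ⇑T n)) ≤ K ^ n := by
      rw [Nat.card_coe_set_eq]; exact hAcardK n hn
    have hlog : Real.log (Nat.card ↥(leastPer ⇑T n)) ≤ n * Real.log K := by
      rcases Nat.eq_zero_or_pos (Nat.card ↥(leastPer ⇑T n)) with h | h
      · rw [h]
        simp only [Nat.cast_zero, Real.log_zero]
        positivity
      · calc Real.log (Nat.card ↥(leastPer ⇑T n))
            ≤ Real.log ((K:ℝ) ^ n) := by
              refine Real.log_le_log (by exact_mod_cast h) ?_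
              exact_mod_cast hcard'
          _ = n * Real.log K := Real.log_pow (K:ℝ) n
    have hnpos : (0:ℝ) < (n:ℝ) := by exact_mod_cast hn
    show Real.log (Nat.card ↥(leastPer ⇑T n)) / n ≤ Real.log K
    rw [div_le_iff₀ hnpos]
    linarith
  obtain ⟨hlogK, c, hc0, hcK, N₂, hN₂⟩ :=
    limsup_pos_extract f hf0 (Real.log K) hfb hgrowth
  have hK2 : 2 ≤ K := by
    by_contra h
    interval_cases K
    · simp only [Nat.cast_zero, Real.log_zero] at hlogK; linarith
    · simp only [Nat.cast_one, Real.log_one] at hlogK; linarith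
  haveI : Nonempty (Fin K) := ⟨⟨0, by omega⟩⟩
  have hK1R : (1:ℝ) ≤ (K:ℝ) := by exact_mod_cast (by omega : 1 ≤ K)
  set E : ℝ := Real.exp c with hEdef
  have hE1 : 1 < E := by
    rw [hEdef, show (1:ℝ) = Real.exp 0 by simp]
    exact Real.exp_lt_exp.mpr hc0
  have hE0 : (0:ℝ) < E := by linarith
  have hEK : E < K := by
    rw [hEdef, ← Real.exp_log (show (0:ℝ) < K by positivity)]
    exact Real.exp_lt_exp.mpr hcK
  set n₀ : ℕ := max N₂ 1 with hn₀def
  have hAboundE : ∀ k : ℕ, n₀ ≤ k → ((leastPer ⇑T k).ncard : ℝ) ≤ E ^ k := by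
    intro k hk
    have hk1 : 1 ≤ k := le_trans (le_max_right _ _) hk
    have hfk := hN₂ k (le_trans (le_max_left _ _) hk)
    rcases Nat.eq_zero_or_pos (leastPer ⇑T k).ncard with h | h
    · rw [h]; simp only [Nat.cast_zero]; positivity
    · have hcast : (0:ℝ) < ((leastPer ⇑T k).ncard : ℝ) := by exact_mod_cast h
      have hlog : Real.log ((leastPer ⇑T k).ncard : ℝ) < c * k := by
        have hfk' : Real.log (Nat.card ↥(leastPer ⇑T k)) / k < c := hfk
        have hkpos : (0:ℝ) < (k:ℝ) := by exact_mod_cast hk1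
        rw [div_lt_iff₀ hkpos] at hfk'
        rw [Nat.card_coe_set_eq] at hfk'
        linarith
      calc ((leastPer ⇑T k).ncard : ℝ)
          = Real.exp (Real.log ((leastPer ⇑T k).ncard : ℝ)) := (Real.exp_log hcast).symm
        _ ≤ Real.exp (c * k) := Real.exp_le_exp.mpr hlog.le
        _ = E ^ k := by rw [hEdef, mul_comm, Real.exp_nat_mul]
  set C : ℝ := (K:ℝ) ^ n₀ with hCdef
  have hC1 : 1 ≤ C := one_le_pow₀ hK1R
  have hAboundC : ∀ k : ℕ, 1 ≤ k → ((leastPer ⇑T k).ncard : ℝ) ≤ C * E ^ k := by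
    intro k hk
    have hEk1 : (1:ℝ) ≤ E ^ k := one_le_pow₀ hE1.le
    have hEkpos : (0:ℝ) < E ^ k := by positivity
    rcases le_or_gt k n₀ with h | h
    · calc ((leastPer ⇑T k).ncard : ℝ) ≤ (K:ℝ) ^ k := by exact_mod_cast hAcardK k hk
        _ ≤ (K:ℝ) ^ n₀ := pow_le_pow_right₀ hK1R h
        _ = C := hCdef.symm
        _ ≤ C * E ^ k := by nlinarith
    · calc ((leastPer ⇑T k).ncard : ℝ) ≤ E ^ k := hAboundE k h.le
        _ ≤ C * E ^ k := by nlinarith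
  obtain ⟨N₁, hN₁⟩ := exists_N1 K hK2 E C hE1.le hEK hC1
  refine ⟨2 * (max n₀ N₁ + 1), fun n₁ hn₁ => ?_⟩
  -- the sets of points of period at most j
  have hPsub : ∀ j : ℕ,
      {x : X | 1 ≤ Function.minimalPeriod ⇑T x ∧ Function.minimalPeriod ⇑T x ≤ j}
        ⊆ ⋃ k ∈ Finset.Icc 1 j, leastPer ⇑T k := by
    intro j x hx
    simp only [Set.mem_iUnion]
    exact ⟨Function.minimalPeriod ⇑T x, by simp only [Finset.mem_Icc]; exact hx, rfl⟩
  have hPfin : ∀ j : ℕ,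
      ({x : X | 1 ≤ Function.minimalPeriod ⇑T x ∧ Function.minimalPeriod ⇑T x ≤ j}).Finite := by
    intro j
    refine Set.Finite.subset (Set.Finite.biUnion (Finset.finite_toSet (Finset.Icc 1 j)) ?_)
      (hPsub j)
    intro k hk
    exact hAfinite k (by simp at hk; omega)
  have hPcardR : ∀ j : ℕ,
      ((({x : X | 1 ≤ Function.minimalPeriod ⇑T x ∧
        Function.minimalPeriod ⇑T x ≤ j}).ncard : ℝ)) ≤ C * (j+1) * E ^ j := by
    intro j
    have h1 : ({x : X | 1 ≤ Function.minimalPeriod ⇑T x ∧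
        Function.minimalPeriod ⇑T x ≤ j}).ncard ≤ ∑ k ∈ Finset.Icc 1 j, (leastPer ⇑T k).ncard := by
      refine le_trans (Set.ncard_le_ncard (hPsub j) ?_) ?_
      · exact Set.Finite.biUnion (Finset.finite_toSet _)
          (fun k hk => hAfinite k (by simp at hk; omega))
      · exact ncard_biUnion_le _ _
          (fun k hk => hAfinite k (by simp at hk; omega))
    have h2 : ((({x : X | 1 ≤ Function.minimalPeriod ⇑T x ∧
        Function.minimalPeriod ⇑T x ≤ j}).ncard : ℝ))
        ≤ ∑ k ∈ Finset.Icc 1 j, ((leastPer ⇑T k).ncard : ℝ) := by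
      rw [← Nat.cast_sum]
      exact_mod_cast h1
    have h3 : ∑ k ∈ Finset.Icc 1 j, ((leastPer ⇑T k).ncard : ℝ)
        ≤ ∑ k ∈ Finset.Icc 1 j, (C * E ^ j) := by
      refine Finset.sum_le_sum (fun k hk => ?_)
      simp only [Finset.mem_Icc] at hk
      calc ((leastPer ⇑T k).ncard : ℝ) ≤ C * E ^ k := hAboundC k hk.1
        _ ≤ C * E ^ j := by
          have := pow_le_pow_right₀ hE1.le hk.2
          nlinarith
    have h4 : ∑ k ∈ Finset.Icc 1 j, (C * E ^ j) = (j : ℝ) * (C * E ^ j) := by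
      rw [Finset.sum_const, Nat.card_Icc, Nat.add_sub_cancel, nsmul_eq_mul]
    calc ((({x : X | 1 ≤ Function.minimalPeriod ⇑T x ∧
        Function.minimalPeriod ⇑T x ≤ j}).ncard : ℝ)) ≤ (j : ℝ) * (C * E ^ j) := by
          rw [← h4]; exact le_trans h2 h3
      _ ≤ C * (j+1) * E ^ j := by
          have hEj : (0:ℝ) < E ^ j := by positivity
          nlinarith
  -- minimal period is preserved by the maps
  have hmpT : ∀ x : X, 0 < Function.minimalPeriod ⇑T x →
      Function.minimalPeriod ⇑T (T x) = Function.minimalPeriod ⇑T x := fun x h =>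
    Function.minimalPeriod_apply (Function.minimalPeriod_pos_iff_mem_periodicPts.mp h)
  have hmpS : ∀ z : ℤ → Fin K, 0 < Function.minimalPeriod shift z →
      Function.minimalPeriod shift (shift z) = Function.minimalPeriod shift z := fun z h =>
    Function.minimalPeriod_apply (Function.minimalPeriod_pos_iff_mem_periodicPts.mp h)
  -- main induction
  have main : ∀ n : ℕ, n ≤ n₁ → ∃ ψ : X → ℤ → Fin K,
      (∀ x : X, 1 ≤ Function.minimalPeriod ⇑T x → Function.minimalPeriod ⇑T x ≤ n →
        ψ x ∈ leastPer (shift : (ℤ → Fin K) → ℤ → Fin K) (Function.minimalPeriod ⇑T x)) ∧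
      (∀ x : X, 1 ≤ Function.minimalPeriod ⇑T x → Function.minimalPeriod ⇑T x ≤ n →
        ψ (T x) = shift (ψ x)) ∧
      (∀ x y : X, 1 ≤ Function.minimalPeriod ⇑T x → Function.minimalPeriod ⇑T x ≤ n →
        1 ≤ Function.minimalPeriod ⇑T y → Function.minimalPeriod ⇑T y ≤ n →
        Function.minimalPeriod ⇑T x = Function.minimalPeriod ⇑T y → ψ x = ψ y → x = y) ∧
      (∀ x y : X, 1 ≤ Function.minimalPeriod ⇑T x → Function.minimalPeriod ⇑T x ≤ n →
        1 ≤ Function.minimalPeriod ⇑T y → Function.minimalPeriod ⇑T y ≤ n →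
        Function.minimalPeriod ⇑T x ≠ Function.minimalPeriod ⇑T y →
        win (Fin K) n₁ (ψ x) ≠ win (Fin K) n₁ (ψ y)) := by
    intro n
    induction n with
    | zero =>
      intro _
      exact ⟨fun _ _ => Classical.arbitrary (Fin K),
        fun x h1 h2 => by omega, fun x h1 h2 => by omega,
        fun x y h1 h2 => by omega, fun x y h1 h2 => by omega⟩
    | succ n ihn =>
      intro hsn
      obtain ⟨ψ₀, hψa, hψb, hψc, hψd⟩ := ihn (by omega)
      set m : ℕ := n + 1 with hmdef
      have hm1 : 1 ≤ m := by omega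
      have hmn₁ : m ≤ n₁ := hsn
      have hAfinm : (leastPer ⇑T m).Finite := hAfinite m hm1
      set Afin : Finset X := hAfinm.toFinset with hAfin
      have hAmem : ∀ x, x ∈ Afin ↔ x ∈ leastPer ⇑T m := fun x => Set.Finite.mem_toFinset _
      have hAcardeq : Afin.card = (leastPer ⇑T m).ncard :=
        (Set.ncard_eq_toFinset_card _ hAfinm).symm
      have hAmmp : ∀ x ∈ Afin, Function.minimalPeriod ⇑T x = m := fun x hx => (hAmem x).mp hx
      have hAminv : ∀ x ∈ Afin, T x ∈ Afin := by
        intro x hx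
        rw [hAmem] at hx ⊢
        show Function.minimalPeriod ⇑T (T x) = m
        rw [hmpT x (by rw [hx]; omega)]
        exact hx
      -- the set of previously used windows
      set Pn : Set X := {x : X | 1 ≤ Function.minimalPeriod ⇑T x ∧
        Function.minimalPeriod ⇑T x ≤ n} with hPndef
      set W : Set (Fin n₁ → Fin K) := win (Fin K) n₁ '' (ψ₀ '' Pn) with hWdef
      have key : ∃ φ : X → ℤ → Fin K,
          (∀ x ∈ Afin, φ x ∈ leastPer (shift : (ℤ → Fin K) → ℤ → Fin K) m) ∧
          (∀ x ∈ Afin, φ (T x) = shift (φ x)) ∧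
          Set.InjOn φ ↑Afin ∧
          (2 * m > n₁ → ∀ x ∈ Afin, win (Fin K) n₁ (φ x) ∉ W) := by
        rcases le_or_gt (2 * m) n₁ with hcase | hcase
        · -- easy case : no avoidance needed
          have hLPfinm : (leastPer (shift : (ℤ → Fin K) → ℤ → Fin K) m).Finite :=
            leastPer_shift_finite (by omega)
          set Bfin : Finset (ℤ → Fin K) := hLPfinm.toFinset with hBfin
          have hBmem : ∀ z, z ∈ Bfin ↔ z ∈ leastPer (shift : (ℤ → Fin K) → ℤ → Fin K) m :=
            fun z => Set.Finite.mem_toFinset _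
          obtain ⟨φ, hφ1, hφ2, hφ3⟩ := inj_code ⇑T shift hTinj hSinj m hm1 Afin.card Afin Bfin
            rfl hAmmp (fun z hz => (hBmem z).mp hz) hAminv
            (fun z hz => by
              rw [hBmem] at hz ⊢
              show Function.minimalPeriod shift (shift z) = m
              rw [hmpS z (by rw [hz]; omega)]
              exact hz)
            (by
              rw [hAcardeq, show Bfin.card = (leastPer (shift : (ℤ → Fin K) → ℤ → Fin K) m).ncard
                from (Set.ncard_eq_toFinset_card _ hLPfinm).symm]
              exact hAcardLP m hm1)
          exact ⟨φ, fun x hx => (hBmem _).mp (hφ1 x hx), hφ2, hφ3, fun hc => absurd hcase (by omega)⟩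
        · -- hard case : avoid previously used windows
          have hLPfinm : (leastPer (shift : (ℤ → Fin K) → ℤ → Fin K) m).Finite :=
            leastPer_shift_finite (by omega)
          set badP : Set (ℤ → Fin K) := {z | z ∈ leastPer (shift : (ℤ → Fin K) → ℤ → Fin K) m ∧
            win (Fin K) n₁ z ∈ W} with hbadPdef
          have hbadPfin : badP.Finite := hLPfinm.subset (fun z hz => hz.1)
          set badPfin : Finset (ℤ → Fin K) := hbadPfin.toFinset with hbadPfinset
          have hbadPmem : ∀ z, z ∈ badPfin ↔ z ∈ badP := fun z => Set.Finite.mem_toFinset _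
          set badO : Set (ℤ → Fin K) := ⋃ z ∈ badPfin, ↑(orbitF shift z m) with hbadOdef
          have hbadOfin : badO.Finite :=
            Set.Finite.biUnion (Finset.finite_toSet _) (fun z _ => (orbitF shift z m).finite_toSet)
          set Bset : Set (ℤ → Fin K) :=
            leastPer (shift : (ℤ → Fin K) → ℤ → Fin K) m \ badO with hBsetdef
          have hBsetfin : Bset.Finite := hLPfinm.subset Set.diff_subset
          set Bfin : Finset (ℤ → Fin K) := hBsetfin.toFinset with hBfin
          have hBmem : ∀ z, z ∈ Bfin ↔ z ∈ Bset := fun z => Set.Finite.mem_toFinset _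
          -- window is not in W for elements of Bset
          have hBW : ∀ z ∈ Bset, win (Fin K) n₁ z ∉ W := by
            intro z hz hzW
            refine hz.2 ?_
            rw [hbadOdef]
            simp only [Set.mem_iUnion]
            exact ⟨z, ⟨(hbadPmem z).mpr ⟨hz.1, hzW⟩, Finset.mem_coe.mpr (mem_orbitF_self hm1)⟩⟩
          -- bounds on the period
          have hmbig : n₀ ≤ m ∧ N₁ ≤ m := by
            have h1 : n₀ ≤ max n₀ N₁ := le_max_left _ _
            have h2 : N₁ ≤ max n₀ N₁ := le_max_right _ _
            omega
          -- counting
          have hWcard : W.ncard ≤ Pn.ncard := by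
            refine le_trans (Set.ncard_image_le ((hPfin n).image ψ₀)) ?_
            exact Set.ncard_image_le (hPfin n)
          have hbadPcard : badP.ncard ≤ Pn.ncard := by
            have hinj : Set.InjOn (win (Fin K) n₁) badP :=
              (win_injOn hm1 hmn₁).mono (fun z hz => hz.1)
            have h1 : badP.ncard = (win (Fin K) n₁ '' badP).ncard :=
              (Set.ncard_image_of_injOn hinj).symm
            have h2 : win (Fin K) n₁ '' badP ⊆ W := by
              rintro _ ⟨z, hz, rfl⟩
              exact hz.2
            have hWfin : W.Finite := (((hPfin n).image ψ₀).image _)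
            rw [h1]
            exact le_trans (Set.ncard_le_ncard h2 hWfin) hWcard
          have hbadOcard : badO.ncard ≤ m * Pn.ncard := by
            refine le_trans (ncard_biUnion_le badPfin _
              (fun z _ => (orbitF shift z m).finite_toSet)) ?_
            have heach : ∀ z ∈ badPfin, ((orbitF shift z m : Set (ℤ → Fin K))).ncard = m := by
              intro z hz
              rw [Set.ncard_coe_finset]
              exact orbitF_card hSinj ((hbadPmem z).mp hz).1
            calc ∑ z ∈ badPfin, ((orbitF shift z m : Set (ℤ → Fin K))).ncard
                = ∑ z ∈ badPfin, m := Finset.sum_congr rfl heach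
              _ = badPfin.card * m := by rw [Finset.sum_const, smul_eq_mul]
              _ ≤ Pn.ncard * m := by
                  have : badPfin.card = badP.ncard := (Set.ncard_eq_toFinset_card _ hbadPfin).symm
                  rw [this]
                  exact Nat.mul_le_mul_right m hbadPcard
              _ = m * Pn.ncard := Nat.mul_comm _ _
          have hEST : (leastPer ⇑T m).ncard + m * Pn.ncard + K ^ (m/2 + 1) ≤ K ^ m := by
            have hcast : ((leastPer ⇑T m).ncard : ℝ) + (m : ℝ) * (Pn.ncard : ℝ)
                + ((K : ℝ)) ^ (m/2+1) ≤ (K:ℝ) ^ m := by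
              have b1 : ((leastPer ⇑T m).ncard : ℝ) ≤ E ^ m := hAboundE m hmbig.1
              have b2 : ((Pn.ncard : ℝ)) ≤ C * m * E ^ m := by
                have hP := hPcardR n
                have hle : C * ((n:ℝ)+1) * E ^ n ≤ C * m * E ^ m := by
                  have hmcast : ((n:ℝ) + 1) = (m:ℝ) := by rw [hmdef]; push_cast; ring
                  rw [← hmcast]
                  have h1 : (0:ℝ) ≤ C * ((n:ℝ)+1) := by positivity
                  exact mul_le_mul_of_nonneg_left (pow_le_pow_right₀ hE1.le (by omega)) h1
                exact le_trans hP hle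
              have b3 : (m : ℝ) * (Pn.ncard : ℝ) ≤ (m:ℝ) * (C * m * E ^ m) :=
                mul_le_mul_of_nonneg_left b2 (Nat.cast_nonneg m)
              have := hN₁ m hmbig.2
              linarith
            have := hcast
            rw [← Nat.cast_le (α := ℝ)]
            push_cast
            have hmc : ((n:ℝ) + 1) = (m:ℝ) := by rw [hmdef]; push_cast; ring
            exact this
          have hBig : K ^ m ≤
              (leastPer (shift : (ℤ → Fin K) → ℤ → Fin K) m).ncard + K ^ (m/2 + 1) :=
            leastPer_shift_card_lower (by omega) hK2
          have hdiffcard : (leastPer (shift : (ℤ → Fin K) → ℤ → Fin K) m).ncard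
              ≤ Bset.ncard + badO.ncard :=
            Set.ncard_le_ncard_diff_add_ncard _ _ hbadOfin
          have hcards : (leastPer ⇑T m).ncard ≤ Bset.ncard := by omega
          -- invariance of Bset
          have hBinv : ∀ z ∈ Bset, shift z ∈ Bset := by
            intro z hz
            constructor
            · show Function.minimalPeriod shift (shift z) = m
              rw [hmpS z (by rw [show Function.minimalPeriod shift z = m from hz.1]; omega)]
              exact hz.1
            · intro hc
              refine hz.2 ?_
              rw [hbadOdef] at hc ⊢
              simp only [Set.mem_iUnion] at hc ⊢
              obtain ⟨w, hw, hzw⟩ := hc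
              refine ⟨w, hw, ?_⟩
              have hmpw : Function.minimalPeriod shift w = m := ((hbadPmem w).mp hw).1
              exact Finset.mem_coe.mpr
                (orbitF_bwd hSinj hmpw hm1 z (Finset.mem_coe.mp hzw))
          obtain ⟨φ, hφ1, hφ2, hφ3⟩ := inj_code ⇑T shift hTinj hSinj m hm1 Afin.card Afin Bfin
            rfl hAmmp
            (fun z hz => ((hBmem z).mp hz).1)
            hAminv
            (fun z hz => (hBmem _).mpr (hBinv z ((hBmem z).mp hz)))
            (by
              rw [hAcardeq, show Bfin.card = Bset.ncard
                from (Set.ncard_eq_toFinset_card _ hBsetfin).symm]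
              exact hcards)
          exact ⟨φ, fun x hx => ((hBmem _).mp (hφ1 x hx)).1, hφ2, hφ3,
            fun _ x hx => hBW _ ((hBmem _).mp (hφ1 x hx))⟩
      obtain ⟨φ, hφ1, hφ2, hφ3, hφ4⟩ := key
      -- patch the map
      refine ⟨fun x => if Function.minimalPeriod ⇑T x = m then φ x else ψ₀ x, ?_, ?_, ?_, ?_⟩
      · intro x h1 h2
        by_cases hx : Function.minimalPeriod ⇑T x = m
        · simp only [if_pos hx]
          rw [hx]
          exact hφ1 x ((hAmem x).mpr hx)
        · simp only [if_neg hx]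
          exact hψa x h1 (by omega)
      · intro x h1 h2
        have hTx : Function.minimalPeriod ⇑T (T x) = Function.minimalPeriod ⇑T x :=
          hmpT x (by omega)
        by_cases hx : Function.minimalPeriod ⇑T x = m
        · simp only [hTx, if_pos hx]
          exact hφ2 x ((hAmem x).mpr hx)
        · simp only [hTx, if_neg hx]
          exact hψb x h1 (by omega)
      · intro x y h1 h2 h3 h4 h5 h6
        by_cases hx : Function.minimalPeriod ⇑T x = m
        · have hy : Function.minimalPeriod ⇑T y = m := by omega
          simp only [if_pos hx, if_pos hy] at h6
          exact hφ3 (by simpa using (hAmem x).mpr hx) (by simpa using (hAmem y).mpr hy) h6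
        · have hy : Function.minimalPeriod ⇑T y ≠ m := by omega
          simp only [if_neg hx, if_neg hy] at h6
          exact hψc x y h1 (by omega) h3 (by omega) h5 h6
      · intro x y h1 h2 h3 h4 h5
        by_cases hx : Function.minimalPeriod ⇑T x = m <;>
          by_cases hy : Function.minimalPeriod ⇑T y = m
        · omega
        · -- x has period m, y has smaller period
          simp only [if_pos hx, if_neg hy]
          have hyn : Function.minimalPeriod ⇑T y ≤ n := by omega
          have hzx : φ x ∈ leastPer (shift : (ℤ → Fin K) → ℤ → Fin K) m :=
            hφ1 x ((hAmem x).mpr hx)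
          have hzy : ψ₀ y ∈ leastPer (shift : (ℤ → Fin K) → ℤ → Fin K)
              (Function.minimalPeriod ⇑T y) := hψa y h3 hyn
          rcases le_or_gt (2 * m) n₁ with hcase | hcase
          · intro hw
            refine cross (n := m) (m := Function.minimalPeriod ⇑T y) h3 (by omega)
              (by omega) hzx hzy hw
          · intro hw
            refine hφ4 (by omega) x ((hAmem x).mpr hx) ?_
            rw [hw, hWdef]
            exact ⟨ψ₀ y, ⟨y, ⟨h3, hyn⟩, rfl⟩, rfl⟩
        · -- symmetric
          simp only [if_neg hx, if_pos hy]
          have hxn : Function.minimalPeriod ⇑T x ≤ n := by omega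
          have hzy : φ y ∈ leastPer (shift : (ℤ → Fin K) → ℤ → Fin K) m :=
            hφ1 y ((hAmem y).mpr hy)
          have hzx : ψ₀ x ∈ leastPer (shift : (ℤ → Fin K) → ℤ → Fin K)
              (Function.minimalPeriod ⇑T x) := hψa x h1 hxn
          rcases le_or_gt (2 * m) n₁ with hcase | hcase
          · intro hw
            refine cross (n := m) (m := Function.minimalPeriod ⇑T x) h1 (by omega)
              (by omega) hzy hzx hw.symm
          · intro hw
            refine hφ4 (by omega) y ((hAmem y).mpr hy) ?_
            rw [← hw, hWdef]
            exact ⟨ψ₀ x, ⟨x, ⟨h1, hxn⟩, rfl⟩, rfl⟩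
        · simp only [if_neg hx, if_neg hy]
          exact hψd x y h1 (by omega) h3 (by omega) h5
  -- assemble
  obtain ⟨ψ, ha, hb, hc, hd⟩ := main n₁ le_rfl
  have hwininj : Set.InjOn (fun x => win (Fin K) n₁ (ψ x))
      {x : X | 1 ≤ Function.minimalPeriod ⇑T x ∧ Function.minimalPeriod ⇑T x ≤ n₁} := by
    intro x hx y hy hxy
    simp only [Set.mem_setOf_eq] at hx hy
    by_cases hmp : Function.minimalPeriod ⇑T x = Function.minimalPeriod ⇑T y
    · have hzx := ha x hx.1 hx.2
      have hzy := ha y hy.1 hy.2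
      rw [hmp] at hzx
      have := win_injOn (Λ := Fin K) hy.1 hy.2 hzx hzy hxy
      exact hc x y hx.1 hx.2 hy.1 hy.2 hmp this
    · exact absurd hxy (hd x y hx.1 hx.2 hy.1 hy.2 hmp)
  refine ⟨ψ, ?_, ?_, ?_⟩
  · intro x hx y hy hxy
    refine hwininj hx hy ?_
    show win (Fin K) n₁ (ψ x) = win (Fin K) n₁ (ψ y)
    rw [hxy]
  · intro x hx
    simp only [Set.mem_setOf_eq] at hx
    exact hb x hx.1 hx.2
  · exact hwininj
end
end
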